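/- arXiv:2203.03023 — 10 statements merged into one kernel-verified Lean document; each statement's English description precedes it below -/
import Mathlib

section
/- Let R be a commutative ring, let n ≥ 1, let a₁, …, aₙ ∈ R and t ∈ R, and let f = a₁x + a₂x² + ⋯ + aₙxⁿ be a formal power series over R. Then Σ_{k=0}^{n} (−1)^{n+k} t^k · ([xⁿ] f(x)^k) = det Mₙ(t), where Mₙ(t) is the n×n matrix whose (i,j) entry (for 1 ≤ i, j ≤ n) equals a_{i−j+1}·t if j ≤ i, equals 1 if j = i+1, and equals 0 if j > i+1. -/
open PowerSeries Finset

section Aux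
variable {R : Type*} [CommRing R]

noncomputable def Fser (a : ℕ → R) : PowerSeries R :=
  PowerSeries.mk fun i => if i = 0 then 0 else a i

lemma coeff_Fser (a : ℕ → R) (m : ℕ) :
    PowerSeries.coeff m (Fser a) = if m = 0 then 0 else a m := coeff_mk _ _

lemma coeff_Fser_pow_eq_zero (a : ℕ → R) {k m : ℕ} (h : m < k) :
    PowerSeries.coeff m ((Fser a) ^ k) = 0 := by
  induction k generalizing m with
  | zero => omega
  | succ k ih =>
    rw [pow_succ', coeff_mul, Finset.Nat.sum_antidiagonal_eq_sum_range_succ_mk]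
    refine Finset.sum_eq_zero fun p hp => ?_
    rw [Finset.mem_range] at hp
    rcases Nat.eq_zero_or_pos p with h0 | h0
    · simp [h0, coeff_Fser]
    · rw [ih (by omega), mul_zero]

lemma coeff_Fser_pow_succ (a : ℕ → R) (m k : ℕ) :
    PowerSeries.coeff (m+1) ((Fser a) ^ (k+1)) =
      ∑ j ∈ range (m+1), a (j+1) * PowerSeries.coeff (m - j) ((Fser a) ^ k) := by
  rw [pow_succ', coeff_mul, Finset.Nat.sum_antidiagonal_eq_sum_range_succ_mk,
    Finset.sum_range_succ']
  simp [coeff_Fser, Nat.succ_sub_succ]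

noncomputable def Sfun (a : ℕ → R) (t : R) (m : ℕ) : R :=
  ∑ k ∈ range (m+1), (-1 : R) ^ (m + k) * t ^ k * PowerSeries.coeff m ((Fser a) ^ k)

lemma Sfun_zero (a : ℕ → R) (t : R) : Sfun a t 0 = 1 := by
  simp [Sfun]

lemma Sfun_succ (a : ℕ → R) (t : R) (m : ℕ) :
    Sfun a t (m+1) = ∑ j ∈ range (m+1), (-1 : R) ^ j * (a (j+1) * t) * Sfun a t (m - j) := by
  unfold Sfun
  rw [Finset.sum_range_succ']
  have hzero : PowerSeries.coeff (m+1) ((Fser a (R := R)) ^ 0) = 0 := by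
    simp [PowerSeries.coeff_one]
  simp only [coeff_Fser_pow_succ, hzero, mul_zero, add_zero, Finset.mul_sum]
  rw [Finset.sum_comm]
  refine Finset.sum_congr rfl fun j hj => ?_
  rw [Finset.mem_range] at hj
  have hbig : ∑ k ∈ range (m-j+1),
        (-1 : R) ^ j * (a (j+1) * t) *
          ((-1 : R) ^ (m-j+k) * t ^ k * PowerSeries.coeff (m-j) ((Fser a) ^ k))
      = ∑ k ∈ range (m+1),
        (-1 : R) ^ j * (a (j+1) * t) *
          ((-1 : R) ^ (m-j+k) * t ^ k * PowerSeries.coeff (m-j) ((Fser a) ^ k)) := by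
    refine Finset.sum_subset (Finset.range_subset_range.mpr (by omega)) fun k hk hk' => ?_
    rw [Finset.mem_range] at hk hk'
    rw [coeff_Fser_pow_eq_zero a (by omega), mul_zero, mul_zero]
  rw [hbig]
  refine Finset.sum_congr rfl fun k hk => ?_
  have hpow : (-1 : R) ^ (m+1+(k+1)) = (-1 : R) ^ j * (-1 : R) ^ (m-j+k) := by
    rw [← pow_add]
    have h2 : m+1+(k+1) = (j + (m-j+k)) + 2 := by omega
    rw [h2, pow_add]
    simp
  rw [hpow, pow_succ]
  ring

def MatA (a b : ℕ → R) (t : R) (n : ℕ) : Matrix (Fin n) (Fin n) R :=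
  Matrix.of fun i j => if (j : ℕ) = 0 then b ((i : ℕ) + 1) * t
    else if (j : ℕ) ≤ (i : ℕ) then a ((i : ℕ) - (j : ℕ) + 1) * t
    else if (j : ℕ) = (i : ℕ) + 1 then 1 else 0

lemma det_MatA_one (a b : ℕ → R) (t : R) : (MatA a b t 1).det = b 1 * t := by
  norm_num [MatA, Matrix.det_fin_one]

lemma det_MatA_zero (a b : ℕ → R) (t : R) : (MatA a b t 0).det = 1 :=
  Matrix.det_fin_zero

lemma det_MatA_succ_succ (a b : ℕ → R) (t : R) (n : ℕ) :
    (MatA a b t (n+2)).det =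
      b 1 * t * (MatA a a t (n+1)).det - (MatA a (fun m => b (m+1)) t (n+1)).det := by
  have hval : ∀ j : Fin (n+1), (((Fin.succ (0 : Fin (n+1))).succAbove j : Fin (n+2)) : ℕ)
      = if (j : ℕ) = 0 then 0 else (j : ℕ) + 1 := by
    intro j
    rw [Fin.succAbove]
    split_ifs with h h2 <;>
      simp_all [Fin.lt_def, Fin.val_succ, Fin.coe_castSucc] <;> omega
  have hsub0 : (MatA a b t (n+2)).submatrix Fin.succ ((0 : Fin (n+2)).succAbove)
      = MatA a a t (n+1) := by
    rw [Fin.succAbove_zero]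
    ext i j
    simp only [Matrix.submatrix_apply, MatA, Matrix.of_apply, Fin.val_succ,
      Nat.add_sub_add_right]
    by_cases hj : (j : ℕ) = 0
    · simp [hj]
    · rw [if_neg (by omega), if_neg hj]
      split_ifs <;> first | rfl | omega
  have hsub1 : (MatA a b t (n+2)).submatrix Fin.succ ((Fin.succ 0 : Fin (n+2)).succAbove)
      = MatA a (fun m => b (m+1)) t (n+1) := by
    ext i j
    simp only [Matrix.submatrix_apply, MatA, Matrix.of_apply, Fin.val_succ, hval j]
    by_cases hj : (j : ℕ) = 0
    · simp [hj]
    · rw [if_neg hj]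
      rw [if_neg (show ¬ ((j:ℕ) + 1 = 0) by omega), if_neg hj]
      simp only [Nat.add_sub_add_right]
      split_ifs <;> first | rfl | omega
  rw [Matrix.det_succ_row_zero, Fin.sum_univ_succ, Fin.sum_univ_succ]
  have h0 : (MatA a b t (n+2)) 0 0 = b 1 * t := by simp [MatA]
  have h1 : (MatA a b t (n+2)) 0 (Fin.succ 0) = 1 := by simp [MatA]
  have hrest : ∀ j : Fin n, (MatA a b t (n+2)) 0 (Fin.succ (Fin.succ j)) = 0 := by
    intro j
    simp only [MatA, Matrix.of_apply, Fin.val_succ, Fin.val_zero]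
    split_ifs <;> first | rfl | omega | simp_all
  simp only [h0, h1, hrest, hsub0, hsub1, mul_zero, zero_mul, Finset.sum_const_zero,
    Fin.val_zero, Fin.val_succ, pow_zero, pow_one, mul_one, one_mul, add_zero]
  ring

lemma det_MatA_expand (a : ℕ → R) (t : R) (n : ℕ) : ∀ b : ℕ → R,
    (MatA a b t (n+1)).det =
      ∑ j ∈ range (n+1), (-1 : R) ^ j * (b (j+1) * t) * (MatA a a t (n-j)).det := by
  induction n with
  | zero =>
    intro b
    rw [det_MatA_one]
    simp [det_MatA_zero]
  | succ n ih =>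
    intro b
    rw [det_MatA_succ_succ, ih (fun m => b (m+1))]
    conv_rhs => rw [Finset.sum_range_succ']
    have hneg : ∀ j ∈ range (n+1),
        (-1 : R) ^ (j+1) * (b (j+1+1) * t) * (MatA a a t (n+1-(j+1))).det
          = -((-1 : R) ^ j * (b (j+2) * t) * (MatA a a t (n-j)).det) := by
      intro j _
      have : n + 1 - (j+1) = n - j := by omega
      rw [this, pow_succ]
      ring
    rw [Finset.sum_congr rfl hneg]
    rw [Finset.sum_neg_distrib]
    simp only [pow_zero, one_mul, Nat.sub_zero, Nat.zero_add]
    ring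

end Aux

/-- **De Moivre polynomial determinant formula.**
For `f = a₁x + ⋯ + aₙxⁿ`, the alternating sum `Σ_{k=0}^{n} (−1)^{n+k} t^k [xⁿ](f^k)`
equals the determinant of the matrix `Mₙ(t)` with `(i,j)` entry `a_{i−j+1}·t` for `j ≤ i`,
`1` for `j = i+1`, and `0` otherwise (indices `1 ≤ i, j ≤ n`). -/
theorem deMoivre_det_formula (R : Type*) [CommRing R] (n : ℕ) (hn : 1 ≤ n)
    (a : ℕ → R) (t : R)
    (f : PowerSeries R) (hf : f = ∑ i ∈ Finset.range n, PowerSeries.monomial (i + 1) (a (i + 1))) :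
    ∑ k ∈ Finset.range (n + 1), (-1 : R) ^ (n + k) * t ^ k * PowerSeries.coeff n (f ^ k) =
      Matrix.det (Matrix.of fun i j : Fin n =>
        if (j : ℕ) ≤ (i : ℕ) then a ((i : ℕ) - (j : ℕ) + 1) * t
        else if (j : ℕ) = (i : ℕ) + 1 then 1 else 0) := by
  have Sfun_eq_det : ∀ m : ℕ, Sfun a t m = (MatA a a t m).det := by
    intro m
    induction m using Nat.strong_induction_on with
    | _ m ih =>
      match m with
      | 0 => rw [Sfun_zero, det_MatA_zero]
      | Nat.succ m =>
        rw [Sfun_succ, det_MatA_expand]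
        refine Finset.sum_congr rfl fun j hj => ?_
        rw [ih (m - j) (by omega)]
  have hcoeff : ∀ p : ℕ, PowerSeries.coeff p f = if p = 0 ∨ n < p then 0 else a p := by
    intro p
    rw [hf, map_sum]
    simp only [PowerSeries.coeff_monomial]
    rcases p with _ | q
    · simp
    · simp only [Nat.succ_eq_add_one, add_left_inj]
      rw [Finset.sum_ite_eq]
      simp only [Finset.mem_range, false_or, Nat.succ_ne_zero]
      split_ifs <;> first | rfl | omega | (exfalso; omega)
  have hpow : ∀ k, ∀ m ≤ n, PowerSeries.coeff m (f ^ k)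
      = PowerSeries.coeff m ((Fser a) ^ k) := by
    intro k
    induction k with
    | zero => intro m hm; rfl
    | succ k ih =>
      intro m hm
      rw [pow_succ', pow_succ', coeff_mul, coeff_mul]
      refine Finset.sum_congr rfl fun p hp => ?_
      rw [Finset.HasAntidiagonal.mem_antidiagonal] at hp
      rw [hcoeff, coeff_Fser, ih p.2 (by omega)]
      congr 1
      split_ifs <;> first | rfl | omega
  have hM : (Matrix.of fun i j : Fin n =>
        if (j : ℕ) ≤ (i : ℕ) then a ((i : ℕ) - (j : ℕ) + 1) * t
        else if (j : ℕ) = (i : ℕ) + 1 then 1 else 0) = MatA a a t n := by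
    ext i j
    simp only [MatA, Matrix.of_apply]
    by_cases hj : (j : ℕ) = 0
    · simp [hj]
    · rw [if_neg hj]
  calc ∑ k ∈ Finset.range (n + 1), (-1 : R) ^ (n + k) * t ^ k * PowerSeries.coeff n (f ^ k)
      = Sfun a t n := by
        unfold Sfun
        exact Finset.sum_congr rfl fun k _ => by rw [hpow k n le_rfl]
    _ = (MatA a a t n).det := Sfun_eq_det n
    _ = _ := by rw [hM]
end

section
/- Let A be a commutative ring and let E, H be formal power series over A, each with constant coefficient 1, satisfying H(t)·E(−t) = 1 (where E(−t) denotes the series obtained from E by the substitution t ↦ −t). Then for every r ≥ 1: (i) [t^r]H = Σ_{k=0}^{r} (−1)^{r−k} · [t^r]((E − 1)^k), and (ii) [t^r]E = Σ_{k=0}^{r} (−1)^{r−k} · [t^r]((H − 1)^k). -/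
open PowerSeries Finset

private lemma key_inverse {A : Type*} [CommRing A] (F G : PowerSeries A)
    (hF : PowerSeries.constantCoeff F = 1) (h : G * F = 1) (r : ℕ) :
    PowerSeries.coeff r G =
      ∑ k ∈ Finset.range (r + 1), (-1 : A) ^ k * PowerSeries.coeff r ((F - 1) ^ k) := by
  set x : PowerSeries A := F - 1 with hx
  set S : PowerSeries A := ∑ k ∈ Finset.range (r + 1), PowerSeries.C ((-1 : A) ^ k) * x ^ k
    with hS
  have htel : S * F = 1 - PowerSeries.C ((-1 : A) ^ (r + 1)) * x ^ (r + 1) := by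
    have hFx : F = 1 + x := by rw [hx]; ring
    have : S * F = ∑ k ∈ Finset.range (r + 1),
        (PowerSeries.C ((-1 : A) ^ k) * x ^ k -
          PowerSeries.C ((-1 : A) ^ (k + 1)) * x ^ (k + 1)) := by
      rw [hS, Finset.sum_mul]
      apply Finset.sum_congr rfl
      intro k _
      rw [hFx]
      simp [pow_succ, map_mul, map_neg, map_one]
      ring
    rw [this, Finset.sum_range_sub' (fun k => PowerSeries.C ((-1 : A) ^ k) * x ^ k)]
    simp
  have hFG : F * G = 1 := by rw [mul_comm]; exact h
  have hSG : S = G - PowerSeries.C ((-1 : A) ^ (r + 1)) * x ^ (r + 1) * G := by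
    calc S = S * (F * G) := by rw [hFG, mul_one]
    _ = (S * F) * G := by ring
    _ = (1 - PowerSeries.C ((-1 : A) ^ (r + 1)) * x ^ (r + 1)) * G := by rw [htel]
    _ = G - PowerSeries.C ((-1 : A) ^ (r + 1)) * x ^ (r + 1) * G := by ring
  have hvanish : PowerSeries.coeff r (PowerSeries.C ((-1 : A) ^ (r + 1)) * x ^ (r + 1) * G)
      = 0 := by
    have hxc : PowerSeries.constantCoeff x = 0 := by
      rw [hx]; simp [hF]
    have hXdvd : (PowerSeries.X : PowerSeries A) ∣ x := PowerSeries.X_dvd_iff.mpr hxc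
    have hdvd : (PowerSeries.X : PowerSeries A) ^ (r + 1) ∣
        PowerSeries.C ((-1 : A) ^ (r + 1)) * x ^ (r + 1) * G := by
      exact Dvd.dvd.mul_right (Dvd.dvd.mul_left (pow_dvd_pow_of_dvd hXdvd (r + 1)) _) _
    exact (PowerSeries.X_pow_dvd_iff.mp hdvd) r (Nat.lt_succ_self r)
  have : PowerSeries.coeff r S = PowerSeries.coeff r G := by
    rw [hSG, map_sub, hvanish, sub_zero]
  rw [← this, hS, map_sum]
  apply Finset.sum_congr rfl
  intro k _
  rw [PowerSeries.coeff_C_mul]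

private lemma sign_flip {A : Type*} [CommRing A] (r k : ℕ) (hk : k ≤ r) :
    (-1 : A) ^ (r - k) = (-1 : A) ^ r * (-1 : A) ^ k := by
  have : (-1 : A) ^ (r - k) * ((-1 : A) ^ k * (-1 : A) ^ k) = (-1 : A) ^ r * (-1 : A) ^ k := by
    rw [← mul_assoc, ← pow_add, Nat.sub_add_cancel hk]
  simpa [← pow_add, ← two_mul, pow_mul] using this

private lemma coeff_rescale_pow {A : Type*} [CommRing A] (X : PowerSeries A) (r k : ℕ) :
    PowerSeries.coeff r ((PowerSeries.rescale (-1) X - 1) ^ k) =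
      (-1 : A) ^ r * PowerSeries.coeff r ((X - 1) ^ k) := by
  have h1 : PowerSeries.rescale (-1 : A) X - 1 = PowerSeries.rescale (-1) (X - 1) := by
    rw [map_sub, map_one]
  rw [h1, ← map_pow, PowerSeries.coeff_rescale]

/-- **Transition formulas between `E` and `H`.**
If `E` and `H` are power series with constant term `1` satisfying `H(t)·E(−t) = 1`, then
for every `r ≥ 1` the coefficients of each are alternating sums of coefficients of powers
of the other minus its constant term. -/
theorem transition_E_H (A : Type*) [CommRing A] (E H : PowerSeries A)
    (hE : PowerSeries.constantCoeff E = 1) (hH : PowerSeries.constantCoeff H = 1)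
    (hEH : H * PowerSeries.rescale (-1) E = 1) :
    ∀ r : ℕ, 1 ≤ r →
      (PowerSeries.coeff r H =
        ∑ k ∈ Finset.range (r + 1), (-1 : A) ^ (r - k) * PowerSeries.coeff r ((E - 1) ^ k)) ∧
      (PowerSeries.coeff r E =
        ∑ k ∈ Finset.range (r + 1), (-1 : A) ^ (r - k) * PowerSeries.coeff r ((H - 1) ^ k)) := by
  intro r _
  have hcE : PowerSeries.constantCoeff (PowerSeries.rescale (-1) E) = 1 := by
    rw [← PowerSeries.coeff_zero_eq_constantCoeff_apply, PowerSeries.coeff_rescale]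
    simpa [PowerSeries.coeff_zero_eq_constantCoeff_apply] using hE
  have hcH : PowerSeries.constantCoeff (PowerSeries.rescale (-1) H) = 1 := by
    rw [← PowerSeries.coeff_zero_eq_constantCoeff_apply, PowerSeries.coeff_rescale]
    simpa [PowerSeries.coeff_zero_eq_constantCoeff_apply] using hH
  have hEH' : E * PowerSeries.rescale (-1) H = 1 := by
    have := congrArg (PowerSeries.rescale (-1 : A)) hEH
    rw [map_mul, map_one, PowerSeries.rescale_rescale] at this
    norm_num at this
    simpa [mul_comm] using this
  constructor
  · rw [key_inverse (PowerSeries.rescale (-1) E) H hcE hEH r]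
    apply Finset.sum_congr rfl
    intro k hk
    rw [coeff_rescale_pow, sign_flip r k (Nat.lt_succ_iff.mp (Finset.mem_range.mp hk))]
    ring
  · rw [key_inverse (PowerSeries.rescale (-1) H) E hcH hEH' r]
    apply Finset.sum_congr rfl
    intro k hk
    rw [coeff_rescale_pow, sign_flip r k (Nat.lt_succ_iff.mp (Finset.mem_range.mp hk))]
    ring
end

section
/- Let A be a commutative ring and let (E, H, P) and (E₂, H₂, P₂) be symmetric triples over A. Then the following are also symmetric triples over A: (i) (H(t), E(t), P(−t)); (ii) (E(t)^m, H(t)^m, m·P(t)) for every integer m (powers of E and H taken in the group of units of A[[t]], E and H being units since their constant coefficients are 1); (iii) (E(−φ(−t)), H(φ(t)), φ′(t)·P(φ(t))) for every formal power series φ over A with constant coefficient 0 (substitution of the constant-term-zero series ±φ(±t) into E, H, P); (iv) (E(t)·E₂(t), H(t)·H₂(t), P(t) + P₂(t)). -/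
open PowerSeries Finset

/-- A symmetric triple: `E` and `H` have constant coefficient `1`,
`E′(t) = E(t)·P(−t)` and `H′(t) = H(t)·P(t)`. -/
def IsSymmetricTriple {A : Type*} [CommRing A] (E H P : PowerSeries A) : Prop :=
  PowerSeries.constantCoeff E = 1 ∧ PowerSeries.constantCoeff H = 1 ∧
    d⁄dX A E = E * PowerSeries.rescale (-1) P ∧ d⁄dX A H = H * P

/-- Substitution of a power series `G` with zero constant coefficient into `f`:
the coefficient of `tⁿ` in `f(G)` is `Σ_{k=0}^{n} ([t^k]f)·([tⁿ](G^k))`. -/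
noncomputable def substInto {A : Type*} [CommRing A] (G f : PowerSeries A) : PowerSeries A :=
  PowerSeries.mk fun n =>
    ∑ k ∈ Finset.range (n + 1), PowerSeries.coeff k f * PowerSeries.coeff n (G ^ k)

namespace SymTripleAux
variable {A : Type*} [CommRing A]

lemma coeff_pow_zero {G : PowerSeries A} (hG : constantCoeff G = 0) {n k : ℕ} (h : n < k) :
    coeff n (G ^ k) = 0 :=
  PowerSeries.X_pow_dvd_iff.mp (pow_dvd_pow_of_dvd (PowerSeries.X_dvd_iff.mpr hG) k) n h

lemma coeff_substInto (G f : PowerSeries A) (n : ℕ) :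
    coeff n (substInto G f) = ∑ k ∈ range (n + 1), coeff k f * coeff n (G ^ k) := by
  simp [substInto]

lemma constantCoeff_substInto (G f : PowerSeries A) :
    constantCoeff (substInto G f) = constantCoeff f := by
  simp only [← coeff_zero_eq_constantCoeff_apply]
  rw [coeff_substInto]
  simp

/-- partial sums represent `substInto` up to coefficient `N - 1`. -/
lemma coeff_substInto_eq {G : PowerSeries A} (hG : constantCoeff G = 0) (f : PowerSeries A)
    {n N : ℕ} (h : n < N) :
    coeff n (substInto G f) = coeff n (∑ k ∈ range N, C (coeff k f) * G ^ k) := by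
  rw [coeff_substInto, map_sum]
  simp_rw [coeff_C_mul]
  refine Finset.sum_subset (range_subset_range.2 h) fun k hk hk' => ?_
  rw [coeff_pow_zero hG (by simp only [mem_range] at hk'; omega), mul_zero]

lemma coeff_mul_congr {a a' b b' : PowerSeries A} {n : ℕ}
    (ha : ∀ j ≤ n, coeff j a = coeff j a') (hb : ∀ j ≤ n, coeff j b = coeff j b') :
    coeff n (a * b) = coeff n (a' * b') := by
  rw [coeff_mul, coeff_mul]
  refine Finset.sum_congr rfl fun p hp => ?_
  rw [Finset.HasAntidiagonal.mem_antidiagonal] at hp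
  rw [ha p.1 (by omega), hb p.2 (by omega)]

lemma sum_antidiag_triangle {M : Type*} [AddCommMonoid M] (n : ℕ) (w : ℕ → ℕ → M)
    (hw : ∀ i j, n < i + j → w i j = 0) :
    ∑ k ∈ range (n + 1), ∑ p ∈ Finset.HasAntidiagonal.antidiagonal k, w p.1 p.2
      = ∑ i ∈ range (n + 1), ∑ j ∈ range (n + 1), w i j := by
  have h1 : ∀ k ∈ range (n + 1),
      ∑ p ∈ Finset.HasAntidiagonal.antidiagonal k, w p.1 p.2
        = ∑ p ∈ range (n + 1) ×ˢ range (n + 1), if p.1 + p.2 = k then w p.1 p.2 else 0 := by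
    intro k hk
    rw [mem_range] at hk
    have hset : Finset.HasAntidiagonal.antidiagonal k
        = Finset.filter (fun p : ℕ × ℕ => p.1 + p.2 = k) (range (n + 1) ×ˢ range (n + 1)) := by
      ext p
      simp only [Finset.mem_filter, Finset.mem_product, mem_range, Finset.HasAntidiagonal.mem_antidiagonal]
      omega
    rw [hset, Finset.sum_filter]
  have h2 : ∀ p ∈ range (n + 1) ×ˢ range (n + 1),
      (∑ k ∈ range (n + 1), if p.1 + p.2 = k then w p.1 p.2 else 0) = w p.1 p.2 := by
    intro p hp
    rcases le_or_gt (p.1 + p.2) n with h | h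
    · rw [Finset.sum_ite_eq (range (n + 1)) (p.1 + p.2) (fun _ => w p.1 p.2)]
      simp [Nat.lt_succ_iff, h]
    · simp [hw _ _ h]
  rw [Finset.sum_congr rfl h1, Finset.sum_comm, Finset.sum_congr rfl h2, Finset.sum_product']

lemma substInto_mul {G : PowerSeries A} (hG : constantCoeff G = 0) (f g : PowerSeries A) :
    substInto G (f * g) = substInto G f * substInto G g := by
  ext n
  set Sf := ∑ k ∈ range (n + 1), C (coeff k f) * G ^ k with hSf
  set Sg := ∑ k ∈ range (n + 1), C (coeff k g) * G ^ k with hSg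
  have hR : coeff n (substInto G f * substInto G g) = coeff n (Sf * Sg) :=
    coeff_mul_congr (fun j hj => coeff_substInto_eq hG f (by omega))
      (fun j hj => coeff_substInto_eq hG g (by omega))
  have hSS : coeff n (Sf * Sg)
      = ∑ i ∈ range (n + 1), ∑ j ∈ range (n + 1),
          coeff i f * coeff j g * coeff n (G ^ (i + j)) := by
    rw [hSf, hSg, Finset.sum_mul_sum]
    rw [map_sum]
    refine Finset.sum_congr rfl fun i _ => ?_
    rw [map_sum]
    refine Finset.sum_congr rfl fun j _ => ?_
    rw [mul_mul_mul_comm, ← map_mul, ← pow_add, coeff_C_mul]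
  have hL : coeff n (substInto G (f * g))
      = ∑ k ∈ range (n + 1), ∑ p ∈ Finset.HasAntidiagonal.antidiagonal k,
          coeff p.1 f * coeff p.2 g * coeff n (G ^ (p.1 + p.2)) := by
    rw [coeff_substInto]
    refine Finset.sum_congr rfl fun k _ => ?_
    rw [coeff_mul, Finset.sum_mul]
    refine Finset.sum_congr rfl fun p hp => ?_
    rw [Finset.HasAntidiagonal.mem_antidiagonal] at hp
    rw [hp]
  rw [hL, hR, hSS]
  exact sum_antidiag_triangle n
    (fun i j => coeff i f * coeff j g * coeff n (G ^ (i + j)))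
    (fun i j h => by rw [coeff_pow_zero hG h, mul_zero])

lemma rescale_substInto (c : A) (G f : PowerSeries A) :
    rescale c (substInto G f) = substInto (rescale c G) f := by
  ext n
  rw [coeff_rescale, coeff_substInto, coeff_substInto, Finset.mul_sum]
  refine Finset.sum_congr rfl fun k _ => ?_
  rw [← map_pow, coeff_rescale]
  ring

lemma substInto_neg (G f : PowerSeries A) :
    substInto (-G) f = substInto G (rescale (-1) f) := by
  ext n
  rw [coeff_substInto, coeff_substInto]
  refine Finset.sum_congr rfl fun k _ => ?_
  have : (-G) ^ k = C ((-1) ^ k) * G ^ k := by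
    rw [neg_pow, map_pow, map_neg, map_one]
  rw [this, coeff_C_mul, coeff_rescale]
  ring

lemma derivative_rescale (c : A) (f : PowerSeries A) :
    d⁄dX A (rescale c f) = C c * rescale c (d⁄dX A f) := by
  ext n
  rw [coeff_derivative, coeff_rescale, coeff_C_mul, coeff_rescale, coeff_derivative, pow_succ]
  ring

lemma derivative_substInto {G : PowerSeries A} (hG : constantCoeff G = 0) (f : PowerSeries A) :
    d⁄dX A (substInto G f) = d⁄dX A G * substInto G (d⁄dX A f) := by
  ext n
  set S' := ∑ k ∈ range (n + 1), C (coeff k (d⁄dX A f)) * G ^ k with hS'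
  have key : d⁄dX A (∑ k ∈ range (n + 2), C (coeff k f) * G ^ k) = d⁄dX A G * S' := by
    rw [map_sum]
    have step : ∀ k, d⁄dX A (C (coeff k f) * G ^ k)
        = C (coeff k f) * (k • (G ^ (k - 1) * d⁄dX A G)) := by
      intro k
      rw [Derivation.leibniz, Derivation.leibniz_pow]
      simp [smul_eq_mul, mul_comm, mul_assoc, mul_left_comm]
    rw [Finset.sum_congr rfl fun k _ => step k]
    rw [Finset.sum_range_succ']
    simp only [zero_smul, mul_zero, add_zero]
    rw [hS', Finset.mul_sum]
    refine Finset.sum_congr rfl fun k _ => ?_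
    rw [coeff_derivative]
    simp only [Nat.add_sub_cancel, map_mul, nsmul_eq_mul, map_add, map_one, map_natCast]
    push_cast
    ring
  calc coeff n (d⁄dX A (substInto G f))
      = coeff (n + 1) (substInto G f) * (n + 1) := coeff_derivative _ _
    _ = coeff (n + 1) (∑ k ∈ range (n + 2), C (coeff k f) * G ^ k) * (n + 1) := by
        rw [coeff_substInto_eq hG f (show n + 1 < n + 2 by omega)]
    _ = coeff n (d⁄dX A (∑ k ∈ range (n + 2), C (coeff k f) * G ^ k)) :=
        (coeff_derivative _ _).symm
    _ = coeff n (d⁄dX A G * S') := by rw [key]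
    _ = coeff n (d⁄dX A G * substInto G (d⁄dX A f)) :=
        coeff_mul_congr (fun j _ => rfl)
          (fun j hj => (coeff_substInto_eq hG (d⁄dX A f) (show j < n + 1 by omega)).symm)

lemma deriv_pow_rel (f Q : PowerSeries A) (h : d⁄dX A f = f * Q) (n : ℕ) :
    d⁄dX A (f ^ n) = f ^ n * (n • Q) := by
  induction n with
  | zero => simp
  | succ n ih =>
    rw [pow_succ, Derivation.leibniz, ih, h, smul_eq_mul, smul_eq_mul, succ_nsmul]
    ring

lemma deriv_unit_zpow (u : (PowerSeries A)ˣ) (Q : PowerSeries A)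
    (h : d⁄dX A ↑u = ↑u * Q) (m : ℤ) :
    d⁄dX A ((u ^ m : (PowerSeries A)ˣ) : PowerSeries A)
      = ((u ^ m : (PowerSeries A)ˣ) : PowerSeries A) * (m • Q) := by
  have hinv : d⁄dX A ((u⁻¹ : (PowerSeries A)ˣ) : PowerSeries A)
      = ((u⁻¹ : (PowerSeries A)ˣ) : PowerSeries A) * (-Q) := by
    rw [PowerSeries.derivative_inv, h]
    have h2 : (↑u⁻¹ : PowerSeries A) * ↑u = 1 := u.inv_mul
    calc -(↑u⁻¹ : PowerSeries A) ^ 2 * (↑u * Q)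
        = -((↑u⁻¹ * ↑u) * (↑u⁻¹ * Q)) := by ring
      _ = (↑u⁻¹ : PowerSeries A) * (-Q) := by rw [h2]; ring
  cases m with
  | ofNat n =>
    rw [Int.ofNat_eq_coe, zpow_natCast, Units.val_pow_eq_pow_val, deriv_pow_rel ↑u Q h n,
      natCast_zsmul]
  | negSucc n =>
    rw [zpow_negSucc, ← inv_pow, Units.val_pow_eq_pow_val,
      deriv_pow_rel _ (-Q) hinv (n + 1)]
    congr 1
    rw [negSucc_zsmul]
    simp [smul_neg]

lemma constCoeff_unit_zpow (u : (PowerSeries A)ˣ) (hu : constantCoeff (↑u : PowerSeries A) = 1) (m : ℤ) :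
    constantCoeff ((u ^ m : (PowerSeries A)ˣ) : PowerSeries A) = 1 := by
  have h1 : Units.map (constantCoeff : PowerSeries A →+* A).toMonoidHom u = 1 :=
    Units.ext (by simpa using hu)
  have h2 := Units.coe_map (constantCoeff : PowerSeries A →+* A).toMonoidHom (u ^ m)
  rw [map_zpow, h1, one_zpow] at h2
  simpa using h2.symm

lemma rescale_neg_one_neg_one (p : PowerSeries A) :
    rescale (-1) (rescale (-1) p) = p := by
  rw [rescale_rescale, neg_mul_neg, one_mul, rescale_one, RingHom.id_apply]

end SymTripleAux

open SymTripleAux in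
/-- **Closure properties of symmetric triples**: swapping, integer powers (taken in the
unit group of `A[[t]]`), substitution of a constant-term-zero series, and products. -/
theorem symmetricTriple_group (A : Type*) [CommRing A] (E H P E₂ H₂ P₂ : PowerSeries A)
    (hT : IsSymmetricTriple E H P) (hT₂ : IsSymmetricTriple E₂ H₂ P₂) :
    IsSymmetricTriple H E (PowerSeries.rescale (-1) P) ∧
    (∀ (m : ℤ) (uE uH : (PowerSeries A)ˣ), (uE : PowerSeries A) = E →
      (uH : PowerSeries A) = H →
      IsSymmetricTriple ((uE ^ m : (PowerSeries A)ˣ) : PowerSeries A)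
        ((uH ^ m : (PowerSeries A)ˣ) : PowerSeries A) (m • P)) ∧
    (∀ φ : PowerSeries A, PowerSeries.constantCoeff φ = 0 →
      IsSymmetricTriple (substInto (-(PowerSeries.rescale (-1) φ)) E) (substInto φ H)
        (d⁄dX A φ * substInto φ P)) ∧
    IsSymmetricTriple (E * E₂) (H * H₂) (P + P₂) := by
  obtain ⟨hE1, hH1, hE', hH'⟩ := hT
  obtain ⟨hE21, hH21, hE2', hH2'⟩ := hT₂
  refine ⟨⟨hH1, hE1, by rw [rescale_neg_one_neg_one]; exact hH', hE'⟩, ?_, ?_, ?_⟩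
  · -- integer powers
    intro m uE uH huE huH
    refine ⟨constCoeff_unit_zpow uE (huE ▸ hE1) m, constCoeff_unit_zpow uH (huH ▸ hH1) m, ?_, ?_⟩
    · rw [deriv_unit_zpow uE (rescale (-1) P) (by rw [huE]; exact hE') m]
      congr 1
      exact (map_zsmul (rescale (-1 : A)) m P).symm
    · exact deriv_unit_zpow uH P (by rw [huH]; exact hH') m
  · -- substitution
    intro φ hφ0
    have hψ0 : constantCoeff (-(rescale (-1) φ)) = 0 := by
      rw [map_neg, ← coeff_zero_eq_constantCoeff_apply, coeff_rescale]
      simp [coeff_zero_eq_constantCoeff_apply, hφ0]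
    set ψ : PowerSeries A := -(rescale (-1) φ) with hψ
    have hdψ : d⁄dX A ψ = rescale (-1) (d⁄dX A φ) := by
      rw [hψ, map_neg, derivative_rescale]
      simp
    have hsub : substInto ψ (rescale (-1) P) = rescale (-1) (substInto φ P) :=
      calc substInto ψ (rescale (-1) P) = substInto (-ψ) P := (substInto_neg ψ P).symm
        _ = substInto (rescale (-1) φ) P := by rw [hψ, neg_neg]
        _ = rescale (-1) (substInto φ P) := (rescale_substInto (-1) φ P).symm
    refine ⟨by rw [constantCoeff_substInto]; exact hE1,
            by rw [constantCoeff_substInto]; exact hH1, ?_, ?_⟩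
    · rw [derivative_substInto hψ0 E, hE', substInto_mul hψ0, hsub, hdψ, map_mul]
      ring
    · rw [derivative_substInto hφ0 H, hH', substInto_mul hφ0]
      ring
  · -- products
    refine ⟨by rw [map_mul, hE1, hE21, one_mul], by rw [map_mul, hH1, hH21, one_mul], ?_, ?_⟩
    · rw [Derivation.leibniz, smul_eq_mul, smul_eq_mul, hE', hE2', map_add]
      ring
    · rw [Derivation.leibniz, smul_eq_mul, smul_eq_mul, hH', hH2']
      ring
end

section
/- Let m ≥ 1 be an integer, let A be a commutative ℚ-algebra, and let (E, H, P) be a symmetric triple over A whose coefficients h_k = [t^k]H vanish whenever m does not divide k. Write e_k = [t^k]E and p_k = [t^{k−1}]P. Define formal power series Ê, Ĥ, P̂ over A by [t^k]Ê = (−1)^{k(m−1)}·e_{mk}, [t^k]Ĥ = h_{mk}, and [t^{k−1}]P̂ = p_{mk}/m for k ≥ 1 (so [t^k]Ê = (−1)^k e_{mk} when m is even and [t^k]Ê = e_{mk} when m is odd). Then (Ê, Ĥ, P̂) is a symmetric triple over A. -/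
open PowerSeries Finset

private lemma sum_range_mul_dvd {M : Type*} [AddCommMonoid M] {m : ℕ} (hm : 0 < m) (N : ℕ)
    (f : ℕ → M) (hf : ∀ a, ¬ m ∣ a → f a = 0) :
    ∑ a ∈ Finset.range (m*N), f a = ∑ i ∈ Finset.range N, f (m*i) := by
  rw [eq_comm]
  rw [← Finset.sum_image (s := Finset.range N) (g := fun i => m*i) (f := f)
    (fun x _ y _ h => Nat.eq_of_mul_eq_mul_left hm h)]
  apply Finset.sum_subset
  · intro a ha
    simp only [Finset.mem_image, Finset.mem_range] at ha ⊢
    obtain ⟨i, hi, rfl⟩ := ha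
    exact (Nat.mul_lt_mul_left hm).mpr hi
  · intro a ha hna
    apply hf
    rintro ⟨c, rfl⟩
    apply hna
    simp only [Finset.mem_image, Finset.mem_range] at ha ⊢
    exact ⟨c, lt_of_mul_lt_mul_left ha (Nat.zero_le m), rfl⟩

private lemma nat_mul_cancel {A : Type*} [AddCommMonoid A] [Module ℚ A] {k : ℕ} (hk : k ≠ 0)
    {x : A} (h : k • x = 0) : x = 0 := by
  have := congrArg (fun y => (k:ℚ)⁻¹ • y) h
  simpa [← Nat.cast_smul_eq_nsmul ℚ, smul_smul,
    inv_mul_cancel₀ (show (k:ℚ) ≠ 0 by exact_mod_cast hk)] using this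

private lemma sign_aux {A : Type*} [CommRing A] (m' k j : ℕ) :
    (-1:A)^((k+j+1)*m') * (-1:A)^((m'+1)*(k+j+1)-1-(m'+1)*k)
      = (-1:A)^(k*m') * (-1:A)^j := by
  have h : (m'+1)*(k+j+1)-1-(m'+1)*k = (m'+1)*j + m' := by
    have e : (m'+1)*(k+j+1) = (m'+1)*k + ((m'+1)*j + m' + 1) := by ring
    omega
  rw [h, ← pow_add, ← pow_add,
    show (k+j+1)*m' + ((m'+1)*j + m') = (k*m'+j) + 2*(j*m'+m') from by ring,
    pow_add, pow_mul, neg_one_sq, one_pow, mul_one, pow_add]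

private lemma coeffP_vanish (m : ℕ) {A : Type*} [CommRing A]
    {H P : PowerSeries A}
    (hH0 : PowerSeries.constantCoeff H = 1)
    (hHd : d⁄dX A H = H * P)
    (hvanish : ∀ k : ℕ, ¬ m ∣ k → PowerSeries.coeff k H = 0) :
    ∀ j : ℕ, ¬ m ∣ (j+1) → PowerSeries.coeff j P = 0 := by
  intro j
  induction j using Nat.strong_induction_on with
  | _ j ih =>
    intro hj
    have h1 := congrArg (coeff j) hHd
    rw [coeff_derivative, coeff_mul, Finset.Nat.sum_antidiagonal_eq_sum_range_succ_mk,
      hvanish (j+1) hj, zero_mul, Finset.sum_range_succ'] at h1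
    dsimp only at h1
    have hz : ∀ k ∈ Finset.range j, coeff (k+1) H * coeff (j-(k+1)) P = 0 := by
      intro k hk
      have hkj : k < j := Finset.mem_range.mp hk
      by_cases hmk : m ∣ (k+1)
      · have hnd : ¬ m ∣ (j - (k+1) + 1) := by
          intro hd
          have hd' : m ∣ (j - k) := by
            have he : j-(k+1)+1 = j-k := by omega
            rwa [he] at hd
          have he2 : j + 1 = (k+1) + (j-k) := by omega
          exact hj (he2 ▸ hmk.add hd')
        rw [ih (j-(k+1)) (by omega) hnd, mul_zero]
      · rw [hvanish _ hmk, zero_mul]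
    rw [Finset.sum_eq_zero hz, zero_add] at h1
    simpa [hH0, coeff_zero_eq_constantCoeff] using h1.symm

private lemma coeffE_vanish (m : ℕ) {A : Type*} [CommRing A] [Algebra ℚ A]
    {E P : PowerSeries A}
    (hEd : d⁄dX A E = E * PowerSeries.rescale (-1) P)
    (hP : ∀ j : ℕ, ¬ m ∣ (j+1) → PowerSeries.coeff j P = 0) :
    ∀ k : ℕ, ¬ m ∣ k → PowerSeries.coeff k E = 0 := by
  intro k
  induction k using Nat.strong_induction_on with
  | _ k ih =>
    intro hk
    obtain ⟨j, rfl⟩ : ∃ j, k = j + 1 := by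
      cases k with
      | zero => exact absurd (dvd_zero m) hk
      | succ j => exact ⟨j, rfl⟩
    have h1 := congrArg (coeff j) hEd
    rw [coeff_derivative, coeff_mul, Finset.Nat.sum_antidiagonal_eq_sum_range_succ_mk] at h1
    dsimp only at h1
    have hz : ∀ i ∈ Finset.range (j+1), coeff i E * coeff (j-i) (rescale (-1) P) = 0 := by
      intro i hi
      have hij : i < j + 1 := Finset.mem_range.mp hi
      by_cases hmi : m ∣ (j - i + 1)
      · have hni : ¬ m ∣ i := fun hd => hk (by
          have he2 : j + 1 = i + (j - i + 1) := by omega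
          exact he2 ▸ hd.add hmi)
        rw [ih i hij hni, zero_mul]
      · rw [coeff_rescale, hP _ hmi, mul_zero, mul_zero]
    rw [Finset.sum_eq_zero hz] at h1
    refine nat_mul_cancel (k := j+1) (by omega) ?_
    rw [nsmul_eq_mul, mul_comm]
    simpa using h1

private lemma root_H (m : ℕ) (hm : 1 ≤ m) {A : Type*} [CommRing A] [Algebra ℚ A]
    {H P : PowerSeries A}
    (hHd : d⁄dX A H = H * P)
    (hvanish : ∀ k : ℕ, ¬ m ∣ k → PowerSeries.coeff k H = 0) :
    d⁄dX A (PowerSeries.mk fun k => PowerSeries.coeff (m * k) H)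
      = (PowerSeries.mk fun k => PowerSeries.coeff (m * k) H)
        * (PowerSeries.mk fun k => ((m : ℚ)⁻¹) • PowerSeries.coeff (m * (k + 1) - 1) P) := by
  have hmQ : (m:ℚ) ≠ 0 := Nat.cast_ne_zero.mpr (by omega)
  ext n
  rw [coeff_derivative, coeff_mul, Finset.Nat.sum_antidiagonal_eq_sum_range_succ_mk]
  simp only [coeff_mk]
  have hM1 : m*(n+1) - 1 + 1 = m*(n+1) :=
    Nat.sub_add_cancel (Nat.one_le_iff_ne_zero.mpr (by positivity))
  have key := congrArg (coeff (m*(n+1)-1)) hHd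
  rw [coeff_derivative, coeff_mul, Finset.Nat.sum_antidiagonal_eq_sum_range_succ_mk, hM1] at key
  dsimp only at key
  have hcast : ((m*(n+1)-1 : ℕ):A) + 1 = ((m*(n+1):ℕ):A) := by
    rw [← Nat.cast_add_one, hM1]
  rw [hcast, show (m*(n+1)-1).succ = m*(n+1) from hM1] at key
  rw [sum_range_mul_dvd (show 0 < m by omega) (n+1) _
    (fun a ha => by rw [hvanish a ha, zero_mul])] at key
  have hsc : coeff (m*(n+1)) H * ((m*(n+1):ℕ):A) = (m*(n+1)) • coeff (m*(n+1)) H := by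
    rw [nsmul_eq_mul, mul_comm]
  rw [hsc] at key
  have hsmul : ∀ x : A, (m:ℚ)⁻¹ • ((m*(n+1)) • x) = x * (↑n + 1) := by
    intro x
    rw [← Nat.cast_smul_eq_nsmul ℚ, smul_smul, Nat.cast_mul, ← mul_assoc,
      inv_mul_cancel₀ hmQ, one_mul, Nat.cast_smul_eq_nsmul, nsmul_eq_mul, mul_comm,
      Nat.cast_add_one]
  rw [← hsmul (coeff (m*(n+1)) H), key, Finset.smul_sum]
  refine Finset.sum_congr rfl fun k hk => ?_
  have hkn : k < n+1 := Finset.mem_range.mp hk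
  have hidx : m*(n+1)-1-m*k = m*(n-k+1)-1 := by
    have e : m*(n+1) = m*k + m*(n-k+1) := by
      rw [← Nat.mul_add]
      congr 1
      omega
    omega
  rw [← hidx, mul_smul_comm]

private lemma root_E (m' : ℕ) {A : Type*} [CommRing A] [Algebra ℚ A]
    {E P : PowerSeries A}
    (hEd : d⁄dX A E = E * PowerSeries.rescale (-1) P)
    (hEv : ∀ k : ℕ, ¬ (m'+1) ∣ k → PowerSeries.coeff k E = 0) :
    d⁄dX A (PowerSeries.mk fun k => (-1 : A) ^ (k * m') * PowerSeries.coeff ((m'+1) * k) E)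
      = (PowerSeries.mk fun k => (-1 : A) ^ (k * m') * PowerSeries.coeff ((m'+1) * k) E)
        * PowerSeries.rescale (-1)
            (PowerSeries.mk fun k =>
              (((m'+1 : ℕ) : ℚ)⁻¹) • PowerSeries.coeff ((m'+1) * (k + 1) - 1) P) := by
  have hmQ : ((m'+1 : ℕ):ℚ) ≠ 0 := Nat.cast_ne_zero.mpr (by omega)
  set m := m' + 1 with hmdef
  ext n
  rw [coeff_derivative, coeff_mul, Finset.Nat.sum_antidiagonal_eq_sum_range_succ_mk]
  simp only [coeff_mk, coeff_rescale]
  have hM1 : m*(n+1) - 1 + 1 = m*(n+1) :=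
    Nat.sub_add_cancel (Nat.one_le_iff_ne_zero.mpr (by positivity))
  have key := congrArg (coeff (m*(n+1)-1)) hEd
  rw [coeff_derivative, coeff_mul, Finset.Nat.sum_antidiagonal_eq_sum_range_succ_mk, hM1] at key
  simp only [coeff_rescale] at key
  have hcast : ((m*(n+1)-1 : ℕ):A) + 1 = ((m*(n+1):ℕ):A) := by
    rw [← Nat.cast_add_one, hM1]
  rw [hcast, show (m*(n+1)-1).succ = m*(n+1) from hM1] at key
  rw [sum_range_mul_dvd (show 0 < m by omega) (n+1) _
    (fun a ha => by rw [hEv a ha, zero_mul])] at key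
  have hsc : coeff (m*(n+1)) E * ((m*(n+1):ℕ):A) = (m*(n+1)) • coeff (m*(n+1)) E := by
    rw [nsmul_eq_mul, mul_comm]
  rw [hsc] at key
  have hsmul : ∀ x : A, (m:ℚ)⁻¹ • ((m*(n+1)) • x) = x * (↑n + 1) := by
    intro x
    rw [← Nat.cast_smul_eq_nsmul ℚ, smul_smul, Nat.cast_mul, ← mul_assoc,
      inv_mul_cancel₀ hmQ, one_mul, Nat.cast_smul_eq_nsmul, nsmul_eq_mul, mul_comm,
      Nat.cast_add_one]
  rw [mul_assoc, ← hsmul (coeff (m*(n+1)) E), key, Finset.smul_sum, Finset.mul_sum]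
  refine Finset.sum_congr rfl fun k hk => ?_
  have hkn : k < n+1 := Finset.mem_range.mp hk
  have hidx : m*(n-k+1)-1 = m*(n+1)-1-m*k := by
    have e : m*(n+1) = m*k + m*(n-k+1) := by
      rw [← Nat.mul_add]
      congr 1
      omega
    omega
  rw [hidx]
  obtain ⟨j, rfl⟩ : ∃ j, n = k + j := ⟨n - k, by omega⟩
  simp only [Nat.add_sub_cancel_left]
  rw [mul_smul_comm, mul_smul_comm, mul_smul_comm]
  congr 1
  have hs := sign_aux (A := A) m' k j
  linear_combination hs * coeff (m*k) E * coeff (m*(k+j+1)-1-m*k) P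

/-- **Extracting an `m`-th root of a symmetric triple.**
If the coefficients of `H` vanish away from multiples of `m`, then
`([t^k]Ê = (−1)^{k(m−1)} e_{mk}, [t^k]Ĥ = h_{mk}, [t^{k}]P̂ = p_{m(k+1)}/m)`
is again a symmetric triple. -/
theorem symmetricTriple_root (m : ℕ) (hm : 1 ≤ m) (A : Type*) [CommRing A] [Algebra ℚ A]
    (E H P : PowerSeries A) (hT : IsSymmetricTriple E H P)
    (hvanish : ∀ k : ℕ, ¬ m ∣ k → PowerSeries.coeff k H = 0) :
    IsSymmetricTriple
      (PowerSeries.mk fun k => (-1 : A) ^ (k * (m - 1)) * PowerSeries.coeff (m * k) E)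
      (PowerSeries.mk fun k => PowerSeries.coeff (m * k) H)
      (PowerSeries.mk fun k => ((m : ℚ)⁻¹) • PowerSeries.coeff (m * (k + 1) - 1) P) := by
  obtain ⟨hE0, hH0, hEd, hHd⟩ := hT
  have hP := coeffP_vanish m hH0 hHd hvanish
  have hEv := coeffE_vanish m hEd hP
  refine ⟨?_, ?_, ?_, ?_⟩
  · rw [← coeff_zero_eq_constantCoeff, coeff_mk]
    simp [coeff_zero_eq_constantCoeff, hE0]
  · rw [← coeff_zero_eq_constantCoeff, coeff_mk]
    simp [coeff_zero_eq_constantCoeff, hH0]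
  · obtain ⟨m', rfl⟩ : ∃ m', m = m' + 1 := ⟨m - 1, by omega⟩
    simp only [Nat.add_sub_cancel]
    exact root_E m' hEd hEv
  · exact root_H m hm hHd hvanish
end

section
/- Let m ≥ 1 be an integer, let A be an integral domain that is a ℚ-algebra, let ω ∈ A be a primitive m-th root of unity, and let (E, H, P) be a symmetric triple over A. Define Ẽ(t) = ∏_{j=0}^{m−1} E(ω^j t), H̃(t) = ∏_{j=0}^{m−1} H(ω^j t), and P̃(t) = Σ_{j=0}^{m−1} ω^j·P(ω^j t), where g(ω^j t) denotes the series obtained from g by rescaling t ↦ ω^j t. Then (Ẽ, H̃, P̃) is a symmetric triple over A; its coefficients ẽ_k = [t^k]Ẽ, h̃_k = [t^k]H̃ and p̃_k = [t^{k−1}]P̃ all vanish whenever m does not divide k; and p̃_k = m·p_k whenever m divides k (k ≥ 1), where p_k = [t^{k−1}]P. -/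
open PowerSeries Finset

section Aux

variable {A : Type*} [CommRing A]

lemma my_derivative_rescale (c : A) (f : PowerSeries A) :
    d⁄dX A (PowerSeries.rescale c f) = c • PowerSeries.rescale c (d⁄dX A f) := by
  ext n
  simp only [coeff_derivative, coeff_rescale, map_smul, smul_eq_mul]
  ring

lemma my_rescale_smul (c a : A) (f : PowerSeries A) :
    PowerSeries.rescale c (a • f) = a • PowerSeries.rescale c f := by
  ext n
  simp only [coeff_rescale, map_smul, smul_eq_mul]
  ring

lemma my_derivative_prod {ι : Type*} [DecidableEq ι] (s : Finset ι) (f : ι → PowerSeries A) :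
    d⁄dX A (∏ i ∈ s, f i) =
      ∑ i ∈ s, (∏ j ∈ s.erase i, f j) * d⁄dX A (f i) := by
  induction s using Finset.induction_on with
  | empty => simp
  | insert a s ha ih =>
    rw [Finset.prod_insert ha, Derivation.leibniz, smul_eq_mul, smul_eq_mul, ih,
      Finset.mul_sum, Finset.sum_insert ha, Finset.erase_insert ha]
    have hterm : ∀ i ∈ s, (∏ j ∈ (insert a s).erase i, f j) * d⁄dX A (f i)
        = f a * ((∏ j ∈ s.erase i, f j) * d⁄dX A (f i)) := by
      intro i hi
      rw [Finset.erase_insert_of_ne (ne_of_mem_of_not_mem hi ha).symm,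
        Finset.prod_insert (fun h => ha (Finset.mem_of_mem_erase h))]
      ring
    rw [Finset.sum_congr rfl hterm, ← Finset.mul_sum]
    ring

lemma my_cc_rescale (a : A) (f : PowerSeries A) :
    PowerSeries.constantCoeff (PowerSeries.rescale a f) =
      PowerSeries.constantCoeff f := by
  rw [← coeff_zero_eq_constantCoeff_apply, ← coeff_zero_eq_constantCoeff_apply,
    coeff_rescale, pow_zero, one_mul]

lemma my_geom [IsDomain A] {m : ℕ} {ω : A} (hω : IsPrimitiveRoot ω m) (k : ℕ) :
    (∑ j ∈ Finset.range m, (ω ^ k) ^ j) = if m ∣ k then (m : A) else 0 := by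
  by_cases h : m ∣ k
  · rw [if_pos h, (hω.pow_eq_one_iff_dvd k).mpr h]
    simp
  · rw [if_neg h]
    have h1 : ω ^ k ≠ 1 := fun e => h ((hω.pow_eq_one_iff_dvd k).mp e)
    have h2 := geom_sum_mul (ω ^ k) m
    rw [← pow_mul, mul_comm k m, pow_mul, hω.pow_eq_one, one_pow, sub_self] at h2
    rcases mul_eq_zero.mp h2 with h3 | h3
    · exact h3
    · exact absurd (sub_eq_zero.mp h3) h1

lemma my_coeff_Ptilde (m : ℕ) (ω : A) (P : PowerSeries A) (n : ℕ) :
    PowerSeries.coeff n (∑ j ∈ Finset.range m, ω ^ j • PowerSeries.rescale (ω ^ j) P) =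
      (∑ j ∈ Finset.range m, (ω ^ (n + 1)) ^ j) * PowerSeries.coeff n P := by
  rw [map_sum, Finset.sum_mul]
  apply Finset.sum_congr rfl
  intro j _
  rw [map_smul, coeff_rescale, smul_eq_mul]
  ring

lemma my_deriv_prod_eq (m : ℕ) (ω : A) (f Q : PowerSeries A) (hf : d⁄dX A f = f * Q) :
    d⁄dX A (∏ j ∈ Finset.range m, PowerSeries.rescale (ω ^ j) f) =
      (∏ j ∈ Finset.range m, PowerSeries.rescale (ω ^ j) f) *
        ∑ j ∈ Finset.range m, ω ^ j • PowerSeries.rescale (ω ^ j) Q := by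
  rw [my_derivative_prod, Finset.mul_sum]
  apply Finset.sum_congr rfl
  intro j hj
  rw [my_derivative_rescale, hf, map_mul, ← Finset.mul_prod_erase _ _ hj,
    smul_eq_C_mul, smul_eq_C_mul]
  ring

lemma my_rescale_inv [IsDomain A] {m : ℕ} {ω : A} (hω : IsPrimitiveRoot ω m)
    (f : PowerSeries A) (hf : PowerSeries.constantCoeff f = 1) :
    PowerSeries.rescale ω (∏ j ∈ Finset.range m, PowerSeries.rescale (ω ^ j) f) =
      ∏ j ∈ Finset.range m, PowerSeries.rescale (ω ^ j) f := by
  have hf0 : f ≠ 0 := fun h => by simp [h] at hf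
  apply mul_right_cancel₀ hf0
  have h1 : PowerSeries.rescale ω (∏ j ∈ Finset.range m, PowerSeries.rescale (ω ^ j) f) =
      ∏ j ∈ Finset.range m, PowerSeries.rescale (ω ^ (j + 1)) f := by
    rw [map_prod]
    exact Finset.prod_congr rfl fun j _ => by rw [rescale_rescale, ← pow_succ]
  have l := Finset.prod_range_succ' (fun j => PowerSeries.rescale (ω ^ j) f) m
  have r := Finset.prod_range_succ (fun j => PowerSeries.rescale (ω ^ j) f) m
  simp only [pow_zero, rescale_one, RingHom.id_apply] at l
  rw [hω.pow_eq_one, rescale_one, RingHom.id_apply] at r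
  rw [h1, ← l, r]

theorem symmetricTriple_rootsOfUnity' (m : ℕ) (hm : 1 ≤ m) (A : Type*) [CommRing A]
    [IsDomain A] [Algebra ℚ A] (ω : A) (hω : IsPrimitiveRoot ω m)
    (E H P : PowerSeries A)
    (hT : PowerSeries.constantCoeff E = 1 ∧ PowerSeries.constantCoeff H = 1 ∧
      d⁄dX A E = E * PowerSeries.rescale (-1) P ∧ d⁄dX A H = H * P) :
    (PowerSeries.constantCoeff (∏ j ∈ Finset.range m, PowerSeries.rescale (ω ^ j) E) = 1 ∧
     PowerSeries.constantCoeff (∏ j ∈ Finset.range m, PowerSeries.rescale (ω ^ j) H) = 1 ∧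
     d⁄dX A (∏ j ∈ Finset.range m, PowerSeries.rescale (ω ^ j) E) =
       (∏ j ∈ Finset.range m, PowerSeries.rescale (ω ^ j) E) *
         PowerSeries.rescale (-1) (∑ j ∈ Finset.range m, ω ^ j • PowerSeries.rescale (ω ^ j) P) ∧
     d⁄dX A (∏ j ∈ Finset.range m, PowerSeries.rescale (ω ^ j) H) =
       (∏ j ∈ Finset.range m, PowerSeries.rescale (ω ^ j) H) *
         (∑ j ∈ Finset.range m, ω ^ j • PowerSeries.rescale (ω ^ j) P)) ∧
    (∀ k : ℕ, ¬ m ∣ k →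
      PowerSeries.coeff k (∏ j ∈ Finset.range m, PowerSeries.rescale (ω ^ j) E) = 0 ∧
      PowerSeries.coeff k (∏ j ∈ Finset.range m, PowerSeries.rescale (ω ^ j) H) = 0 ∧
      PowerSeries.coeff (k - 1)
        (∑ j ∈ Finset.range m, ω ^ j • PowerSeries.rescale (ω ^ j) P) = 0) ∧
    (∀ k : ℕ, 1 ≤ k → m ∣ k →
      PowerSeries.coeff (k - 1)
          (∑ j ∈ Finset.range m, ω ^ j • PowerSeries.rescale (ω ^ j) P) =
        (m : A) * PowerSeries.coeff (k - 1) P) := by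
  obtain ⟨hE1, hH1, hE', hH'⟩ := hT
  refine ⟨⟨?_, ?_, ?_, ?_⟩, ?_, ?_⟩
  · rw [map_prod]; simp [my_cc_rescale, hE1]
  · rw [map_prod]; simp [my_cc_rescale, hH1]
  · rw [my_deriv_prod_eq m ω E (PowerSeries.rescale (-1) P) hE']
    congr 1
    rw [map_sum]
    apply Finset.sum_congr rfl
    intro j _
    rw [my_rescale_smul, rescale_rescale, rescale_rescale, mul_comm]
  · exact my_deriv_prod_eq m ω H P hH'
  · intro k hk
    have hk1 : 1 ≤ k := by
      rcases Nat.eq_zero_or_pos k with h | h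
      · exact absurd (h ▸ dvd_zero m) hk
      · exact h
    have hωk : ω ^ k ≠ 1 := fun e => hk ((hω.pow_eq_one_iff_dvd k).mp e)
    have key : ∀ f : PowerSeries A, PowerSeries.constantCoeff f = 1 →
        PowerSeries.coeff k (∏ j ∈ Finset.range m, PowerSeries.rescale (ω ^ j) f) = 0 := by
      intro f hf
      have h := congrArg (PowerSeries.coeff k) (my_rescale_inv hω f hf)
      rw [coeff_rescale] at h
      have h0 : (ω ^ k - 1) *
          PowerSeries.coeff k (∏ j ∈ Finset.range m, PowerSeries.rescale (ω ^ j) f) = 0 := by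
        rw [sub_mul, one_mul, h, sub_self]
      rcases mul_eq_zero.mp h0 with h2 | h2
      · exact absurd (sub_eq_zero.mp h2) hωk
      · exact h2
    refine ⟨key E hE1, key H hH1, ?_⟩
    rw [my_coeff_Ptilde, Nat.sub_add_cancel hk1, my_geom hω, if_neg hk, zero_mul]
  · intro k hk1 hkm
    rw [my_coeff_Ptilde, Nat.sub_add_cancel hk1, my_geom hω, if_pos hkm, mul_comm]

end Aux

/-- **Averaging a symmetric triple over `m`-th roots of unity.**
With `Ẽ(t) = ∏_j E(ω^j t)`, `H̃(t) = ∏_j H(ω^j t)`, `P̃(t) = Σ_j ω^j P(ω^j t)` for a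
primitive `m`-th root of unity `ω`, `(Ẽ, H̃, P̃)` is a symmetric triple, all coefficients
vanish away from indices divisible by `m`, and `p̃_k = m·p_k` for `m ∣ k`, `k ≥ 1`. -/
theorem symmetricTriple_rootsOfUnity (m : ℕ) (hm : 1 ≤ m) (A : Type*) [CommRing A]
    [IsDomain A] [Algebra ℚ A] (ω : A) (hω : IsPrimitiveRoot ω m)
    (E H P : PowerSeries A) (hT : IsSymmetricTriple E H P) :
    IsSymmetricTriple
      (∏ j ∈ Finset.range m, PowerSeries.rescale (ω ^ j) E)
      (∏ j ∈ Finset.range m, PowerSeries.rescale (ω ^ j) H)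
      (∑ j ∈ Finset.range m, ω ^ j • PowerSeries.rescale (ω ^ j) P) ∧
    (∀ k : ℕ, ¬ m ∣ k →
      PowerSeries.coeff k (∏ j ∈ Finset.range m, PowerSeries.rescale (ω ^ j) E) = 0 ∧
      PowerSeries.coeff k (∏ j ∈ Finset.range m, PowerSeries.rescale (ω ^ j) H) = 0 ∧
      PowerSeries.coeff (k - 1)
        (∑ j ∈ Finset.range m, ω ^ j • PowerSeries.rescale (ω ^ j) P) = 0) ∧
    (∀ k : ℕ, 1 ≤ k → m ∣ k →
      PowerSeries.coeff (k - 1)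
          (∑ j ∈ Finset.range m, ω ^ j • PowerSeries.rescale (ω ^ j) P) =
        (m : A) * PowerSeries.coeff (k - 1) P) := by
  exact symmetricTriple_rootsOfUnity' m hm A ω hω E H P hT
end

section
/- Let A be a commutative ℚ-algebra and let (E, H, P) be a symmetric triple over A such that [t^k]E = [t^{k−1}]P for all k ≥ 1 (i.e. e_k = p_k for all k ≥ 1). Then there exists c ∈ A such that for all k ≥ 0: [t^k]H = c^k/(k+1)! and [t^k]E = (−1)^k·c^k·B_k/k!, where B_k is the k-th Bernoulli number (with the convention B₁ = −1/2, i.e. Σ_{k≥0} B_k t^k/k! = t/(e^t − 1)). -/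
open PowerSeries Finset

noncomputable section
namespace STaux
def q (k : ℕ) : ℚ := (-1) ^ k * bernoulli k / k.factorial
def r (k : ℕ) : ℚ := 1 / (k + 1).factorial
def F : ℚ⟦X⟧ := bernoulliPowerSeries ℚ
def G : ℚ⟦X⟧ := rescale (-1) F
def K : ℚ⟦X⟧ := PowerSeries.mk r
def Dm : ℚ⟦X⟧ := PowerSeries.mk fun j => (-1) ^ j * q (j + 1)
def Dp : ℚ⟦X⟧ := PowerSeries.mk fun j => q (j + 1)
def E0 : ℚ⟦X⟧ := exp ℚ
def E1 : ℚ⟦X⟧ := rescale (-1) (exp ℚ)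

lemma coeff_F (n : ℕ) : PowerSeries.coeff n F = bernoulli n / n.factorial := by
  simp [F, bernoulliPowerSeries, coeff_mk]
lemma coeff_G (n : ℕ) : PowerSeries.coeff n G = q n := by
  simp [G, coeff_rescale, coeff_F, q, mul_div_assoc]
lemma hEE : E0 * E1 = 1 := exp_mul_exp_neg_eq_one
lemma hFU : F * (E0 - 1) = X := bernoulliPowerSeries_mul_exp_sub_one ℚ
lemma hGV : G * (E1 - 1) = -X := by
  have := congrArg (rescale (-1 : ℚ)) hFU
  simpa [map_mul, map_sub, map_one, rescale_neg_one_X, G, E1, E0] using this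
lemma hKX : X * K = E0 - 1 := by
  ext n
  cases n with
  | zero => simp [K, E0, coeff_zero_eq_constantCoeff, constantCoeff_exp]
  | succ n =>
      rw [coeff_succ_X_mul]
      simp [K, coeff_mk, r, E0, coeff_exp, Nat.factorial]
lemma hdE0 : d⁄dX ℚ E0 = E0 := by
  ext n
  rw [coeff_derivative]
  simp only [E0, coeff_exp, eq_ratCast, Rat.cast_div]
  push_cast [Nat.factorial_succ]
  field_simp
lemma hdE1 : d⁄dX ℚ E1 = -E1 := by
  ext n
  rw [coeff_derivative, map_neg]
  simp only [E1, coeff_rescale, coeff_exp, eq_ratCast, Rat.cast_div]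
  push_cast [Nat.factorial_succ, pow_succ]
  field_simp
lemma hXDm : X * Dm = 1 - F := by
  ext n
  cases n with
  | zero => simp [coeff_zero_eq_constantCoeff, F, bernoulliPowerSeries, coeff_mk,
      constantCoeff_mk]  -- constantCoeff of mk?
  | succ n =>
      rw [coeff_succ_X_mul]
      simp only [Dm, coeff_mk, map_sub, coeff_F, coeff_one, Nat.succ_ne_zero, if_false, zero_sub, q]
      have hm : ((-1:ℚ))^n * (-1)^(n+1) = -1 := by
        rw [← pow_add]; exact Odd.neg_one_pow ⟨n, by ring⟩
      rw [mul_div_assoc, ← mul_assoc, hm, neg_one_mul]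
lemma hXDp : X * Dp = G - 1 := by
  ext n
  cases n with
  | zero =>
      have h0 : PowerSeries.coeff 0 G = 1 := by simpa [q] using coeff_G 0
      rw [map_sub, h0, coeff_zero_X_mul]
      simp

  | succ n =>
      rw [coeff_succ_X_mul]
      simp [Dp, coeff_mk, coeff_G]

lemma coeff_E0 (n : ℕ) : PowerSeries.coeff n E0 = 1 / n.factorial := by
  simp [E0, coeff_exp]

lemma coeff_E1 (n : ℕ) : PowerSeries.coeff n E1 = (-1) ^ n / n.factorial := by
  simp [E1, coeff_rescale, coeff_exp, div_eq_mul_inv]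

lemma hE1ne : E1 - 1 ≠ 0 := by
  intro hc
  have := congrArg (PowerSeries.coeff 1) hc
  rw [map_sub, coeff_E1] at this
  simp at this

lemma hE0ne : E0 ≠ 0 := by
  intro hc
  have := congrArg (PowerSeries.coeff 0) hc
  rw [coeff_E0] at this
  simp at this

lemma hGE : G * E1 = F := by
  apply mul_right_cancel₀ (mul_ne_zero hE1ne hE0ne)
  linear_combination E1 * E0 * hGV - F * hEE + hFU - X * hEE

lemma hGr : (d⁄dX ℚ G) * (E1 - 1) - G * E1 = -1 := by
  have h := congrArg (d⁄dX ℚ) hGV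
  rw [Derivation.leibniz, map_sub, hdE1, map_neg, derivative_X] at h
  rw [Derivation.map_one_eq_zero] at h
  rw [smul_eq_mul, smul_eq_mul] at h
  linear_combination h

lemma hKr : (d⁄dX ℚ K) * X + K = E0 := by
  have h := congrArg (d⁄dX ℚ) hKX
  rw [Derivation.leibniz, map_sub, hdE0, derivative_X] at h
  rw [Derivation.map_one_eq_zero] at h
  rw [smul_eq_mul, smul_eq_mul] at h
  linear_combination h

lemma L1' : X * d⁄dX ℚ G = G * (1 - F) := by
  apply mul_right_cancel₀ hE1ne
  linear_combination X * hGr + X * hGE + (F - 1) * hGV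

lemma L2' : X * d⁄dX ℚ K = K * (G - 1) := by
  apply mul_right_cancel₀ (mul_ne_zero X_ne_zero hE1ne)
  linear_combination (X * (E1 - 1)) * hKr - (K * X) * hGV + X * hEE + X * hKX

lemma L1 : d⁄dX ℚ G = G * Dm := by
  apply mul_left_cancel₀ (X_ne_zero (R := ℚ))
  rw [L1', ← hXDm]; ring

lemma L2 : d⁄dX ℚ K = K * Dp := by
  apply mul_left_cancel₀ (X_ne_zero (R := ℚ))
  rw [L2', ← hXDp]; ring

lemma Iq (k : ℕ) :
    ∑ p ∈ antidiagonal k, q p.1 * ((-1) ^ p.2 * q (p.2 + 1)) = (k + 1 : ℚ) * q (k + 1) := by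
  have h := congrArg (PowerSeries.coeff k) L1
  rw [coeff_derivative, coeff_mul, coeff_G] at h
  simp only [coeff_G, Dm, coeff_mk] at h
  push_cast at h
  linear_combination -h

lemma IIq (k : ℕ) :
    ∑ p ∈ antidiagonal k, r p.1 * q (p.2 + 1) = (k + 1 : ℚ) * r (k + 1) := by
  have h := congrArg (PowerSeries.coeff k) L2
  rw [coeff_derivative, coeff_mul] at h
  simp only [K, coeff_mk, Dp] at h
  push_cast at h
  linear_combination -h

end STaux

end
open STaux in
/-- If `e_k = p_k` for all `k ≥ 1` in a symmetric triple over a `ℚ`-algebra, then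
for some `c`, `h_k = c^k/(k+1)!` and `e_k = (−1)^k c^k B_k/k!`, where `B_k` are the
Bernoulli numbers with `B₁ = −1/2` (Mathlib's `bernoulli`). -/
theorem symmetricTriple_e_eq_p (A : Type*) [CommRing A] [Algebra ℚ A] (E H P : PowerSeries A)
    (hT : IsSymmetricTriple E H P)
    (h : ∀ k : ℕ, 1 ≤ k → PowerSeries.coeff k E = PowerSeries.coeff (k - 1) P) :
    ∃ c : A, ∀ k : ℕ,
      PowerSeries.coeff k H = algebraMap ℚ A (1 / (k + 1).factorial) * c ^ k ∧
      PowerSeries.coeff k E =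
        algebraMap ℚ A ((-1) ^ k * bernoulli k / k.factorial) * c ^ k := by
  obtain ⟨hE0A, hH0A, hdEA, hdHA⟩ := hT
  set φ := algebraMap ℚ A with hφdef
  have hdiv : ∀ (x : ℚ) (a b : A), x ≠ 0 → a * φ x = b * φ x → a = b := by
    intro x a b hx hab
    have h2 := congrArg (· * φ x⁻¹) hab
    simpa [mul_assoc, ← map_mul, mul_inv_cancel₀ hx] using h2
  have recE : ∀ n : ℕ, PowerSeries.coeff (n+1) E * ((n : A) + 1) =
      ∑ p ∈ antidiagonal n,
        PowerSeries.coeff p.1 E * ((-1 : A) ^ p.2 * PowerSeries.coeff (p.2+1) E) := by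
    intro n
    have h1 := congrArg (PowerSeries.coeff n) hdEA
    rw [coeff_derivative, coeff_mul] at h1
    push_cast at h1 ⊢
    rw [h1]
    apply Finset.sum_congr rfl
    intro p _
    rw [coeff_rescale, h (p.2+1) (by omega)]
    simp
  have recH : ∀ n : ℕ, PowerSeries.coeff (n+1) H * ((n : A) + 1) =
      ∑ p ∈ antidiagonal n,
        PowerSeries.coeff p.1 H * PowerSeries.coeff (p.2+1) E := by
    intro n
    have h1 := congrArg (PowerSeries.coeff n) hdHA
    rw [coeff_derivative, coeff_mul] at h1
    push_cast at h1 ⊢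
    rw [h1]
    apply Finset.sum_congr rfl
    intro p _
    rw [h (p.2+1) (by omega)]
    simp
  set c : A := 2 * PowerSeries.coeff 1 E with hcdef
  have hq0 : q 0 = 1 := by norm_num [q]
  have hek : ∀ k : ℕ, PowerSeries.coeff k E = φ (q k) * c ^ k := by
    intro k
    induction k using Nat.strong_induction_on with
    | _ k ih =>
      match k with
      | 0 =>
          rw [coeff_zero_eq_constantCoeff_apply, hE0A, hq0, map_one, pow_zero]
          ring
      | 1 =>
          have hq1 : q 1 = 1/2 := by norm_num [q]
          have h2A : (2 : A) = φ 2 := by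
            rw [hφdef, map_ofNat]
          rw [hq1, pow_one, hcdef, ← mul_assoc, h2A, ← map_mul]
          norm_num
      | (m+2) =>
          have hmem : ((0, m+1) : ℕ × ℕ) ∈ antidiagonal (m+1) := by
            simp [HasAntidiagonal.mem_antidiagonal]
          have hrec := recE (m+1)
          rw [← Finset.sum_erase_add _ _ hmem] at hrec
          have hsum : ∑ p ∈ (antidiagonal (m+1)).erase (0, m+1),
              PowerSeries.coeff p.1 E * ((-1 : A) ^ p.2 * PowerSeries.coeff (p.2+1) E)
              = φ (∑ p ∈ (antidiagonal (m+1)).erase (0, m+1),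
                  q p.1 * ((-1 : ℚ) ^ p.2 * q (p.2+1))) * c ^ (m+2) := by
            rw [map_sum, Finset.sum_mul]
            apply Finset.sum_congr rfl
            intro p hp
            obtain ⟨hpne, hpmem⟩ := Finset.mem_erase.mp hp
            have hps : p.1 + p.2 = m + 1 := mem_antidiagonal.mp hpmem
            have h2 : p.2 + 1 < m + 2 := by
              rcases Nat.lt_or_ge p.2 (m+1) with hlt | hge
              · omega
              · exfalso
                apply hpne
                have hp2 : p.2 = m + 1 := by omega
                have hp1 : p.1 = 0 := by omega
                exact Prod.ext hp1 hp2
            rw [ih p.1 (by omega), ih (p.2+1) h2]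
            have hpows : p.1 + (p.2 + 1) = m + 2 := by omega
            rw [← hpows, map_mul, map_mul, map_pow, map_neg, map_one, pow_add]
            ring
          rw [hsum, coeff_zero_eq_constantCoeff_apply, hE0A] at hrec
          push_cast at hrec
          set d : ℚ := ((m : ℚ) + 2) - (-1 : ℚ) ^ (m+1) with hddef
          have hdne : d ≠ 0 := by
            have hm : (0:ℚ) ≤ (m : ℚ) := Nat.cast_nonneg m
            intro hc
            rcases neg_one_pow_eq_or ℚ (m+1) with he | he <;>
              rw [hddef, he] at hc <;> linarith
          have hqs : ∑ p ∈ (antidiagonal (m+1)).erase (0, m+1),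
              q p.1 * ((-1 : ℚ) ^ p.2 * q (p.2+1)) = d * q (m+2) := by
            have hIq := Iq (m+1)
            rw [← Finset.sum_erase_add _ _ hmem] at hIq
            rw [hq0] at hIq
            push_cast at hIq
            linear_combination hIq
          have hφ := congrArg φ hqs
          rw [map_mul] at hφ
          have hφd : φ d = ((m : A) + 2) - (-1 : A) ^ (m+1) := by
            rw [hddef, map_sub, map_pow, map_neg, map_one, map_add, map_natCast, map_ofNat]
          rw [hφd] at hφ
          apply hdiv d _ _ hdne
          rw [hφd]
          linear_combination hrec + c ^ (m+2) * hφ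
  have hhk : ∀ k : ℕ, PowerSeries.coeff k H = φ (r k) * c ^ k := by
    intro k
    induction k using Nat.strong_induction_on with
    | _ k ih =>
      match k with
      | 0 =>
          rw [coeff_zero_eq_constantCoeff_apply, hH0A,
            show r 0 = 1 from by norm_num [r], map_one, pow_zero]
          ring
      | (n+1) =>
          have hrec := recH n
          have hsum : ∑ p ∈ antidiagonal n,
              PowerSeries.coeff p.1 H * PowerSeries.coeff (p.2+1) E
              = φ (∑ p ∈ antidiagonal n, r p.1 * q (p.2+1)) * c ^ (n+1) := by
            rw [map_sum, Finset.sum_mul]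
            apply Finset.sum_congr rfl
            intro p hp
            have hps : p.1 + p.2 = n := mem_antidiagonal.mp hp
            rw [ih p.1 (by omega), hek (p.2+1)]
            have hpows : p.1 + (p.2 + 1) = n + 1 := by omega
            rw [← hpows, map_mul, pow_add]
            ring
          rw [hsum, IIq n, map_mul] at hrec
          apply hdiv ((n : ℚ) + 1) _ _ (by positivity)
          have hφn : φ ((n : ℚ) + 1) = (n : A) + 1 := by push_cast; simp
          rw [hφn] at hrec ⊢
          linear_combination hrec
  refine ⟨c, fun k => ⟨?_, ?_⟩⟩
  · rw [hhk k]; rfl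
  · rw [hek k]; rfl
end

section
/- For all integers n ≥ 1 and k ≥ 1, the coefficient of t^k in the formal power series ∏_{j=1}^{n} (1 − t/j)^{−1} over ℚ equals Σ_{j=1}^{n} (−1)^{j−1} · C(n, j) · (1/j^k), where C(n, j) is the binomial coefficient. (Equivalently, the complete homogeneous symmetric polynomial h_k evaluated at 1, 1/2, …, 1/n equals Σ_{j=1}^{n} (−1)^{j−1} C(n, j) j^{−k}.) -/
open PowerSeries Finset

/-- Geometric series `∑ a^k t^k`. -/
noncomputable def geomPS (a : ℚ) : PowerSeries ℚ := PowerSeries.mk fun k => a ^ k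

lemma coeff_geomPS (a : ℚ) (k : ℕ) : PowerSeries.coeff (R := ℚ) k (geomPS a) = a ^ k :=
  coeff_mk _ _

lemma geomPS_mul_cancel (a : ℚ) :
    geomPS a * (1 - PowerSeries.C (R := ℚ) a * PowerSeries.X) = 1 := by
  have h : geomPS a * (1 - PowerSeries.C (R := ℚ) a * PowerSeries.X)
      = geomPS a - PowerSeries.C (R := ℚ) a * (geomPS a * PowerSeries.X) := by ring
  rw [h]
  ext k
  cases k with
  | zero => simp [geomPS]
  | succ k =>
    simp [map_sub, coeff_C_mul, coeff_succ_mul_X, coeff_geomPS, pow_succ,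
      coeff_one, mul_comm]

lemma inv_one_sub_eq_geomPS (a : ℚ) :
    (1 - PowerSeries.C (R := ℚ) a * PowerSeries.X)⁻¹ = geomPS a := by
  rw [PowerSeries.inv_eq_iff_mul_eq_one (by simp)]
  exact geomPS_mul_cancel a

lemma one_sub_ne_zero (a : ℚ) : (1 - PowerSeries.C (R := ℚ) a * PowerSeries.X) ≠ 0 := by
  intro h
  have := congrArg (PowerSeries.constantCoeff (R := ℚ)) h
  simp at this

/-- Partial fraction decomposition for two distinct geometric series. -/
lemma geomPS_mul_geomPS (a b : ℚ) (hab : a ≠ b) :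
    geomPS a * geomPS b
      = PowerSeries.C (R := ℚ) (a / (a - b)) * geomPS a
        + PowerSeries.C (R := ℚ) (b / (b - a)) * geomPS b := by
  have hab' : a - b ≠ 0 := sub_ne_zero.mpr hab
  have hba' : b - a ≠ 0 := sub_ne_zero.mpr (Ne.symm hab)
  apply mul_right_cancel₀
    (mul_ne_zero (one_sub_ne_zero a) (one_sub_ne_zero b))
  have e1 : geomPS a * geomPS b
        * ((1 - PowerSeries.C (R := ℚ) a * PowerSeries.X) * (1 - PowerSeries.C (R := ℚ) b * PowerSeries.X))
      = (geomPS a * (1 - PowerSeries.C (R := ℚ) a * PowerSeries.X))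
        * (geomPS b * (1 - PowerSeries.C (R := ℚ) b * PowerSeries.X)) := by ring
  have e2 : (PowerSeries.C (R := ℚ) (a / (a - b)) * geomPS a
        + PowerSeries.C (R := ℚ) (b / (b - a)) * geomPS b)
        * ((1 - PowerSeries.C (R := ℚ) a * PowerSeries.X) * (1 - PowerSeries.C (R := ℚ) b * PowerSeries.X))
      = PowerSeries.C (R := ℚ) (a / (a - b))
          * (geomPS a * (1 - PowerSeries.C (R := ℚ) a * PowerSeries.X))
          * (1 - PowerSeries.C (R := ℚ) b * PowerSeries.X)
        + PowerSeries.C (R := ℚ) (b / (b - a))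
          * (geomPS b * (1 - PowerSeries.C (R := ℚ) b * PowerSeries.X))
          * (1 - PowerSeries.C (R := ℚ) a * PowerSeries.X) := by ring
  rw [e1, e2, geomPS_mul_cancel, geomPS_mul_cancel, mul_one, mul_one, mul_one]
  have e3 : PowerSeries.C (R := ℚ) (a / (a - b)) * (1 - PowerSeries.C (R := ℚ) b * PowerSeries.X)
        + PowerSeries.C (R := ℚ) (b / (b - a)) * (1 - PowerSeries.C (R := ℚ) a * PowerSeries.X)
      = PowerSeries.C (R := ℚ) (a / (a - b) + b / (b - a))
        - PowerSeries.C (R := ℚ) (a / (a - b) * b + b / (b - a) * a) * PowerSeries.X := by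
    simp only [map_add, map_mul]; ring
  have h1 : a / (a - b) + b / (b - a) = 1 := by field_simp; ring
  have h2 : a / (a - b) * b + b / (b - a) * a = 0 := by field_simp; ring
  rw [e3, h1, h2]
  simp

lemma nat_id1 (n j : ℕ) (hj : j ≤ n) :
    n.choose j * (n + 1) = (n + 1).choose j * (n + 1 - j) := by
  cases j with
  | zero => simp
  | succ k =>
    rw [Nat.choose_succ_succ, Nat.succ_sub_succ, add_mul, ← Nat.choose_succ_right_eq,
      ← Nat.mul_add]
    congr 1
    omega

lemma nat_id2 (n j : ℕ) (h1 : 1 ≤ j) (hj : j ≤ n) :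
    n.choose j * j = n.choose (j - 1) * (n + 1 - j) := by
  obtain ⟨k, rfl⟩ : ∃ k, j = k + 1 := ⟨j - 1, by omega⟩
  have := Nat.choose_succ_right_eq n k
  simpa [Nat.succ_sub_succ] using this

lemma rat_id1 (n j : ℕ) (h1 : 1 ≤ j) (hj : j ≤ n) :
    (n.choose j : ℚ) * ((1 / (j : ℚ)) / (1 / (j : ℚ) - 1 / ((n : ℚ) + 1)))
      = ((n + 1).choose j : ℚ) := by
  have hj0 : (j : ℚ) ≠ 0 := by positivity
  have hn0 : ((n : ℚ) + 1) ≠ 0 := by positivity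
  have hjn : (j : ℚ) < (n : ℚ) + 1 := by exact_mod_cast Nat.lt_succ_of_le hj
  have hne : ((n : ℚ) + 1) - (j : ℚ) ≠ 0 := by linarith
  have hkey : (n.choose j : ℚ) * ((n : ℚ) + 1)
      = ((n + 1).choose j : ℚ) * (((n : ℚ) + 1) - (j : ℚ)) := by
    have h := nat_id1 n j hj
    have hc : ((n + 1 - j : ℕ) : ℚ) = ((n : ℚ) + 1) - (j : ℚ) := by
      push_cast [Nat.cast_sub (by omega : j ≤ n + 1)]
      ring
    calc (n.choose j : ℚ) * ((n : ℚ) + 1)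
        = ((n.choose j * (n + 1) : ℕ) : ℚ) := by push_cast; ring
      _ = (((n + 1).choose j * (n + 1 - j) : ℕ) : ℚ) := by exact_mod_cast h
      _ = ((n + 1).choose j : ℚ) * (((n : ℚ) + 1) - (j : ℚ)) := by
          push_cast [hc]; ring
  field_simp
  linarith [hkey]

lemma rat_id2 (n j : ℕ) (h1 : 1 ≤ j) (hj : j ≤ n) :
    (-1 : ℚ) ^ (j - 1) * (n.choose j : ℚ)
        * ((1 / ((n : ℚ) + 1)) / (1 / ((n : ℚ) + 1) - 1 / (j : ℚ)))
      = (-1 : ℚ) ^ j * (n.choose (j - 1) : ℚ) := by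
  have hj0 : (j : ℚ) ≠ 0 := by positivity
  have hn0 : ((n : ℚ) + 1) ≠ 0 := by positivity
  have hjn : (j : ℚ) < (n : ℚ) + 1 := by exact_mod_cast Nat.lt_succ_of_le hj
  have hne : (j : ℚ) - ((n : ℚ) + 1) ≠ 0 := by linarith
  have hkey : (n.choose j : ℚ) * (j : ℚ)
      = (n.choose (j - 1) : ℚ) * (((n : ℚ) + 1) - (j : ℚ)) := by
    have h := nat_id2 n j h1 hj
    have hc : ((n + 1 - j : ℕ) : ℚ) = ((n : ℚ) + 1) - (j : ℚ) := by
      push_cast [Nat.cast_sub (by omega : j ≤ n + 1)]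
      ring
    calc (n.choose j : ℚ) * (j : ℚ) = ((n.choose j * j : ℕ) : ℚ) := by push_cast; ring
      _ = ((n.choose (j - 1) * (n + 1 - j) : ℕ) : ℚ) := by exact_mod_cast h
      _ = (n.choose (j - 1) : ℚ) * (((n : ℚ) + 1) - (j : ℚ)) := by push_cast [hc]; ring
  have hpow : (-1 : ℚ) ^ j = -(-1 : ℚ) ^ (j - 1) := by
    obtain ⟨k, rfl⟩ : ∃ k, j = k + 1 := ⟨j - 1, by omega⟩
    simp [pow_succ, mul_comm]
  have hd : 1 / ((n : ℚ) + 1) - 1 / (j : ℚ) ≠ 0 := by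
    intro h
    field_simp at h
    linarith
  have hmain : (n.choose j : ℚ) * ((1 / ((n : ℚ) + 1)) / (1 / ((n : ℚ) + 1) - 1 / (j : ℚ)))
      = -(n.choose (j - 1) : ℚ) := by
    field_simp
    linear_combination hkey
  calc (-1 : ℚ) ^ (j - 1) * (n.choose j : ℚ)
        * ((1 / ((n : ℚ) + 1)) / (1 / ((n : ℚ) + 1) - 1 / (j : ℚ)))
      = (-1 : ℚ) ^ (j - 1) * ((n.choose j : ℚ)
        * ((1 / ((n : ℚ) + 1)) / (1 / ((n : ℚ) + 1) - 1 / (j : ℚ)))) := by ring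
    _ = (-1 : ℚ) ^ (j - 1) * -(n.choose (j - 1) : ℚ) := by rw [hmain]
    _ = (-1 : ℚ) ^ j * (n.choose (j - 1) : ℚ) := by rw [hpow]; ring

lemma sum_beta (n : ℕ) (hn : 1 ≤ n) :
    ∑ j ∈ Icc 1 n, (-1 : ℚ) ^ (j - 1) * (n.choose j : ℚ)
        * ((1 / ((n : ℚ) + 1)) / (1 / ((n : ℚ) + 1) - 1 / (j : ℚ)))
      = (-1 : ℚ) ^ n := by
  have h1 : ∑ j ∈ Icc 1 n, (-1 : ℚ) ^ (j - 1) * (n.choose j : ℚ)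
        * ((1 / ((n : ℚ) + 1)) / (1 / ((n : ℚ) + 1) - 1 / (j : ℚ)))
      = ∑ j ∈ Icc 1 n, (-1 : ℚ) ^ j * (n.choose (j - 1) : ℚ) :=
    Finset.sum_congr rfl fun j hj => by
      rw [Finset.mem_Icc] at hj
      exact rat_id2 n j hj.1 hj.2
  rw [h1, show (Icc 1 n : Finset ℕ) = Ico 1 (n + 1) from by rw [Finset.Ico_add_one_right_eq_Icc],
    Finset.sum_Ico_eq_sum_range]
  simp only [Nat.add_sub_cancel]
  have h2 : ∀ i ∈ range n,
      (-1 : ℚ) ^ (1 + i) * (n.choose (1 + i - 1) : ℚ)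
        = -((-1 : ℚ) ^ i * (n.choose i : ℚ)) := by
    intro i _
    have hi : 1 + i - 1 = i := by omega
    rw [hi, pow_add]
    ring
  rw [Finset.sum_congr rfl h2, Finset.sum_neg_distrib]
  have halt : ∑ i ∈ range (n + 1), (-1 : ℚ) ^ i * (n.choose i : ℚ) = 0 := by
    have h := Int.alternating_sum_range_choose_of_ne (by omega : n ≠ 0)
    have h' : ((∑ i ∈ range (n + 1), ((-1 : ℤ) ^ i * n.choose i) : ℤ) : ℚ) = 0 := by
      exact_mod_cast h
    push_cast at h'
    exact h'
  have hsplit := Finset.sum_range_succ (fun i => (-1 : ℚ) ^ i * (n.choose i : ℚ)) n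
  rw [halt, Nat.choose_self, Nat.cast_one, mul_one] at hsplit
  linarith [hsplit]

lemma key_identity (n : ℕ) (hn : 1 ≤ n) :
    ∏ j ∈ Icc 1 n, geomPS (1 / (j : ℚ))
      = ∑ j ∈ Icc 1 n,
          PowerSeries.C (R := ℚ) ((-1 : ℚ) ^ (j - 1) * (n.choose j : ℚ)) * geomPS (1 / (j : ℚ)) := by
  induction n, hn using Nat.le_induction with
  | base => simp
  | succ n hn ih =>
    have hc : (((n + 1 : ℕ)) : ℚ) = (n : ℚ) + 1 := by push_cast; ring
    rw [Finset.prod_Icc_succ_top (by omega), ih, Finset.sum_mul, hc]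
    have hstep : ∀ j ∈ Icc 1 n,
        PowerSeries.C (R := ℚ) ((-1 : ℚ) ^ (j - 1) * (n.choose j : ℚ)) * geomPS (1 / (j : ℚ))
            * geomPS (1 / ((n : ℚ) + 1))
          = PowerSeries.C (R := ℚ) ((-1 : ℚ) ^ (j - 1) * ((n + 1).choose j : ℚ))
              * geomPS (1 / (j : ℚ))
            + PowerSeries.C (R := ℚ) ((-1 : ℚ) ^ (j - 1) * (n.choose j : ℚ)
                * ((1 / ((n : ℚ) + 1)) / (1 / ((n : ℚ) + 1) - 1 / (j : ℚ))))
              * geomPS (1 / ((n : ℚ) + 1)) := by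
      intro j hj
      rw [Finset.mem_Icc] at hj
      have hj0 : (j : ℚ) ≠ 0 := by
        have : 0 < j := hj.1
        positivity
      have hjn : (j : ℚ) < (n : ℚ) + 1 := by exact_mod_cast Nat.lt_succ_of_le hj.2
      have hab : 1 / (j : ℚ) ≠ 1 / ((n : ℚ) + 1) := by
        intro h
        have hn0 : ((n : ℚ) + 1) ≠ 0 := by positivity
        field_simp at h
        linarith
      rw [mul_assoc, geomPS_mul_geomPS _ _ hab, mul_add, ← mul_assoc, ← mul_assoc,
        ← map_mul, ← map_mul]
      congr 2
      rw [mul_assoc, rat_id1 n j hj.1 hj.2]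
    rw [Finset.sum_congr rfl hstep, Finset.sum_add_distrib]
    have hbs : ∑ j ∈ Icc 1 n,
        PowerSeries.C (R := ℚ) ((-1 : ℚ) ^ (j - 1) * (n.choose j : ℚ)
            * ((1 / ((n : ℚ) + 1)) / (1 / ((n : ℚ) + 1) - 1 / (j : ℚ))))
          * geomPS (1 / ((n : ℚ) + 1))
        = PowerSeries.C (R := ℚ) ((-1 : ℚ) ^ n) * geomPS (1 / ((n : ℚ) + 1)) := by
      rw [← Finset.sum_mul, ← map_sum, sum_beta n hn]
    rw [hbs, Finset.sum_Icc_succ_top (by omega : 1 ≤ n + 1)]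
    rw [hc]
    congr 1
    congr 1
    congr 1
    simp [Nat.choose_self]
  
/-- **Harmonic multiset numbers as alternating binomial sums.**
For `n, k ≥ 1`, the coefficient of `t^k` in `∏_{j=1}^{n} (1 − t/j)^{−1}` over `ℚ`
equals `Σ_{j=1}^{n} (−1)^{j−1} C(n,j)/j^k`. -/
theorem harmonic_multiset_formula (n k : ℕ) (hn : 1 ≤ n) (hk : 1 ≤ k) :
    PowerSeries.coeff (R := ℚ) k
        (∏ j ∈ Finset.Icc 1 n, (1 - PowerSeries.C (R := ℚ) (1 / (j : ℚ)) * PowerSeries.X)⁻¹) =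
      ∑ j ∈ Finset.Icc 1 n, (-1 : ℚ) ^ (j - 1) * (n.choose j : ℚ) * (1 / (j : ℚ) ^ k) := by
  have hp : (∏ j ∈ Finset.Icc 1 n, (1 - PowerSeries.C (R := ℚ) (1 / (j : ℚ)) * PowerSeries.X)⁻¹)
      = ∏ j ∈ Finset.Icc 1 n, geomPS (1 / (j : ℚ)) :=
    Finset.prod_congr rfl fun j _ => inv_one_sub_eq_geomPS _
  rw [hp, key_identity n hn, map_sum]
  refine Finset.sum_congr rfl fun j hj => ?_
  rw [PowerSeries.coeff_C_mul, coeff_geomPS]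
  rw [div_pow, one_pow]
end

section
/- Work in the ring of formal power series ℚ[[q]]. Let φ be the power series with [q⁰]φ = 1, [qⁿ]φ = 2 if n ≥ 1 is a perfect square, and [qⁿ]φ = 0 otherwise. For integers s ≥ 0 and n ≥ 0 define N_s(n) := [qⁿ](φ^s) and p̄_s(n) := [qⁿ]((∏_{j=1}^{n} (1 + q^j)·(1 − q^j)^{−1})^s) (the product over j from 1 to n; for n = 0 the empty product). Then for every integer r ≥ 1 and every n ≥ 0: N_r(n) = Σ_{j=0}^{n} (−1)^{n−j} C(n+1, j+1) · p̄_{r·j}(n), and p̄_r(n) = Σ_{j=0}^{n} (−1)^{n−j} C(n+1, j+1) · N_{r·j}(n). -/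
open PowerSeries Finset

open scoped Classical in
/-- The theta series `φ(q) = Σ_{m∈ℤ} q^{m²} = 1 + 2Σ_{m≥1} q^{m²}`. -/
noncomputable def thetaSeries : PowerSeries ℚ :=
  PowerSeries.mk fun n => if n = 0 then 1 else if ∃ m : ℕ, n = m ^ 2 then 2 else 0

/-- `N_s(n)`: the coefficient of `qⁿ` in `φ(q)^s` (number of representations of `n`
as an ordered sum of `s` squares, for `s ≥ 1`). -/
noncomputable def numSqReps (s n : ℕ) : ℚ := PowerSeries.coeff (R := ℚ) n (thetaSeries ^ s)

/-- `p̄_s(n)`: the coefficient of `qⁿ` in `(∏_{j=1}^{n} (1+q^j)/(1−q^j))^s`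
(the number of `s`-colored overpartitions of `n`, for `s ≥ 1`). -/
noncomputable def overPart (s n : ℕ) : ℚ :=
  PowerSeries.coeff (R := ℚ) n
    ((∏ j ∈ Finset.Icc 1 n, (1 + PowerSeries.X ^ j) * (1 - PowerSeries.X ^ j)⁻¹) ^ s)


namespace SqOvAux

noncomputable section

abbrev R := PowerSeries ℚ

def Modd (n : ℕ) : R := ∏ j ∈ range n, (1 - X ^ (2*j+1))
def Me (n : ℕ) : R := ∏ j ∈ range n, (1 - X ^ (2*j+2))
def Mm (n : ℕ) : R := ∏ j ∈ range n, (1 - X ^ (j+1))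
def NN (m k : ℕ) : R := ∏ j ∈ range k, (1 - X ^ (2*(m+1+j-k)))
def bb (m k : ℕ) : R := if k ≤ m then X^(k*(k-1)) * NN m k * (Me k)⁻¹ else 0
def ee (n k : ℕ) : ℕ := (k-n)^2 + (n-k)^2
def Tt (n : ℕ) : R := 1 + 2 * ∑ k ∈ range n, (-1:R)^(k+1) * X^((k+1)^2)

-- basic tools
lemma cc_one_sub (j : ℕ) (hj : j ≠ 0) : constantCoeff ((1 : R) - X ^ j) = 1 := by
  simp [hj]

lemma dsub {N : ℕ} {a b c d : R} (h1 : (X:R)^N ∣ a - b) (h2 : (X:R)^N ∣ c - d) :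
    (X:R)^N ∣ a * c - b * d := by
  have : a * c - b * d = (a - b) * c + b * (c - d) := by ring
  rw [this]; exact dvd_add (h1.mul_right c) (h2.mul_left b)

lemma dpow {N : ℕ} {a b : R} (h : (X:R)^N ∣ a - b) (r : ℕ) : (X:R)^N ∣ a^r - b^r := by
  induction r with
  | zero => simp
  | succ r ih => rw [pow_succ, pow_succ]; exact dsub ih h

lemma dprod_one {N : ℕ} {s : Finset ℕ} {f : ℕ → R} (h : ∀ i ∈ s, (X:R)^N ∣ f i - 1) :
    (X:R)^N ∣ (∏ i ∈ s, f i) - 1 := by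
  classical
  induction s using Finset.cons_induction with
  | empty => simp
  | cons a s ha ih =>
    rw [Finset.prod_cons]
    have := dsub (h a (Finset.mem_cons_self a s)) (ih fun i hi => h i (Finset.mem_cons.2 (Or.inr hi)))
    simpa using this

lemma coeff_eq_of_dvd {n : ℕ} {a b : R} (h : (X:R)^(n+1) ∣ a - b) :
    coeff n a = coeff n b := by
  have := (X_pow_dvd_iff.1 h) n (Nat.lt_succ_self n)
  rw [map_sub, sub_eq_zero] at this; exact this

lemma unit_cancel {N : ℕ} {a b u w : R} (hw : u * w = 1)
    (h : (X:R)^N ∣ a * u - b * u) : (X:R)^N ∣ a - b := by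
  have : a - b = (a * u - b * u) * w := by
    rw [sub_mul, mul_assoc, mul_assoc, hw, mul_one, mul_one]
  rw [this]; exact h.mul_right w


lemma cc_Me (k : ℕ) : constantCoeff (Me k) = 1 := by
  rw [Me, map_prod]
  refine Finset.prod_eq_one fun j _ => by simp

lemma Me_ne (k : ℕ) : (Me k : R) ≠ 0 := by
  intro h
  have := cc_Me k
  rw [h] at this; simp at this

lemma Me_inv_mul (k : ℕ) : (Me k)⁻¹ * Me k = 1 :=
  PowerSeries.inv_mul_cancel _ (by rw [cc_Me]; exact one_ne_zero)

lemma Me_mul_inv (k : ℕ) : Me k * (Me k)⁻¹ = 1 :=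
  PowerSeries.mul_inv_cancel _ (by rw [cc_Me]; exact one_ne_zero)

lemma Me_succ (k : ℕ) : Me (k+1) = Me k * (1 - X^(2*k+2)) := Finset.prod_range_succ _ _

lemma NN_self (m : ℕ) : NN m m = Me m := by
  unfold NN Me
  refine Finset.prod_congr rfl fun j hj => ?_
  rw [show 2*(m+1+j-m) = 2*j+2 by omega]

lemma NN_split (m k : ℕ) (h1 : 1 ≤ k) (h2 : k ≤ m+1) :
    NN m k = (1 - X^(2*(m+1-k))) * NN m (k-1) := by
  obtain ⟨k', rfl⟩ : ∃ k', k = k' + 1 := ⟨k-1, by omega⟩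
  unfold NN
  rw [Finset.prod_range_succ']
  simp only [Nat.add_sub_cancel]
  rw [mul_comm]
  congr 1
  refine Finset.prod_congr rfl fun j hj => ?_
  rw [show 2*(m+1+(j+1)-(k'+1)) = 2*(m+1+j-k') by omega]

lemma NN_succ (m k : ℕ) (h1 : 1 ≤ k) (h2 : k ≤ m+1) :
    NN (m+1) k = NN m (k-1) * (1 - X^(2*(m+1))) := by
  obtain ⟨k', rfl⟩ : ∃ k', k = k' + 1 := ⟨k-1, by omega⟩
  unfold NN
  rw [Finset.prod_range_succ]
  simp only [Nat.add_sub_cancel]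
  congr 1
  · refine Finset.prod_congr rfl fun j hj => ?_
    rw [show 2*(m+1+1+j-(k'+1)) = 2*(m+1+j-k') by omega]
  · rw [show 2*(m+1+1+k'-(k'+1)) = 2*(m+1) by omega]

lemma pascal_exp1 (m k : ℕ) (h1 : 1 ≤ k) (h2 : k ≤ m+1) :
    k*(k-1) + 2*(m+1-k) = 2*m + (k-1)*(k-1-1) := by
  obtain ⟨k', rfl⟩ : ∃ k', k = k' + 1 := ⟨k-1, by omega⟩
  simp only [Nat.add_sub_cancel]
  cases k' with
  | zero => omega
  | succ k'' =>
    simp only [Nat.add_sub_cancel]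
    zify [show k''+1+1 ≤ m+1 from h2]
    ring

lemma pascal_exp2 (m k : ℕ) (h1 : 1 ≤ k) :
    k*(k-1) + 2*(m+1) = 2*m + (k-1)*(k-1-1) + 2*k := by
  obtain ⟨k', rfl⟩ : ∃ k', k = k' + 1 := ⟨k-1, by omega⟩
  simp only [Nat.add_sub_cancel]
  cases k' with
  | zero => omega
  | succ k'' =>
    simp only [Nat.add_sub_cancel]
    zify
    ring

lemma bb_pascal (m k : ℕ) (hk1 : 1 ≤ k) (hk2 : k ≤ m + 1) :
    bb (m+1) k = bb m k + X^(2*m) * bb m (k-1) := by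
  have lcan : ∀ (a : R) (k : ℕ), a * Me k * (Me k)⁻¹ = a := fun a k => by
    rw [mul_assoc, Me_mul_inv, mul_one]
  have rcan : ∀ (a : R) (k : ℕ), a * (Me k)⁻¹ * Me k = a := fun a k => by
    rw [mul_assoc, Me_inv_mul, mul_one]
  rcases Nat.lt_or_ge m k with h | h
  · -- k = m+1
    have hk : k = m + 1 := by omega
    subst hk
    rw [bb, bb, bb, if_pos le_rfl, if_neg (by omega), if_pos (by omega)]
    simp only [Nat.add_sub_cancel, zero_add]
    rw [NN_self, NN_self, lcan, lcan, ← pow_add]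
    congr 1
    cases m with
    | zero => simp
    | succ s =>
      simp only [Nat.add_sub_cancel]
      zify
      ring
  · -- k ≤ m
    rw [bb, bb, bb, if_pos (by omega), if_pos h, if_pos (by omega)]
    apply mul_right_cancel₀ (Me_ne k)
    rw [rcan, add_mul, rcan]
    have hMe : Me k = Me (k-1) * (1 - X^(2*k)) := by
      have h' := Me_succ (k-1)
      rw [show k-1+1 = k by omega, show 2*(k-1)+2 = 2*k by omega] at h'
      exact h'
    rw [NN_succ m k hk1 (by omega), NN_split m k hk1 (by omega), hMe]
    rw [show X^(2*m) * (X^((k-1)*(k-1-1)) * NN m (k-1) * (Me (k-1))⁻¹) * (Me (k-1) * (1 - X^(2*k)))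
        = X^(2*m) * X^((k-1)*(k-1-1)) * NN m (k-1) * ((Me (k-1))⁻¹ * Me (k-1)) * (1 - X^(2*k)) by ring]
    rw [Me_inv_mul, mul_one]
    have key : (X:R)^(k*(k-1)) * (1 - X^(2*(m+1))) =
        X^(k*(k-1)) * (1 - X^(2*(m+1-k))) + X^(2*m) * X^((k-1)*(k-1-1)) * (1 - X^(2*k)) := by
      have e1 : (X:R)^(k*(k-1)) * X^(2*(m+1-k)) = X^(2*m) * X^((k-1)*(k-1-1)) := by
        rw [← pow_add, ← pow_add, pascal_exp1 m k hk1 (by omega)]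
      have e2 : (X:R)^(k*(k-1)) * X^(2*(m+1)) = X^(2*m) * X^((k-1)*(k-1-1)) * X^(2*k) := by
        rw [← pow_add, ← pow_add, ← pow_add, pascal_exp2 m k hk1]
      calc (X:R)^(k*(k-1)) * (1 - X^(2*(m+1)))
          = X^(k*(k-1)) - X^(k*(k-1)) * X^(2*(m+1)) := by ring
        _ = X^(k*(k-1)) - X^(k*(k-1)) * X^(2*(m+1-k)) + (X^(2*m) * X^((k-1)*(k-1-1)) - X^(2*m) * X^((k-1)*(k-1-1)) * X^(2*k)) := by
            rw [e1, e2]; ring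
        _ = _ := by ring
    calc X^(k*(k-1)) * (NN m (k-1) * (1 - X^(2*(m+1))))
        = NN m (k-1) * (X^(k*(k-1)) * (1 - X^(2*(m+1)))) := by ring
      _ = NN m (k-1) * (X^(k*(k-1)) * (1 - X^(2*(m+1-k))) + X^(2*m) * X^((k-1)*(k-1-1)) * (1 - X^(2*k))) := by rw [key]
      _ = _ := by ring

lemma bb_zero (m : ℕ) : bb m 0 = 1 := by
  rw [bb, if_pos (Nat.zero_le m)]
  simp [NN, Me]

lemma bb_top (m : ℕ) : bb m (m+1) = 0 := by rw [bb, if_neg (by omega)]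

lemma qbt (m : ℕ) (Y Z : R) :
    ∏ i ∈ range m, (Y + Z * X^(2*i)) = ∑ k ∈ range (m+1), bb m k * Z^k * Y^(m-k) := by
  induction m with
  | zero => simp [bb_zero]
  | succ m ih =>
    rw [Finset.prod_range_succ, ih]
    have step1 : (∑ k ∈ range (m+1), bb m k * Z^k * Y^(m-k)) * (Y + Z * X^(2*m))
        = (∑ k ∈ range (m+1), bb m k * Z^k * Y^(m-k) * Y)
          + ∑ k ∈ range (m+1), X^(2*m) * bb m k * Z^(k+1) * Y^(m-k) := by
      rw [mul_add, Finset.sum_mul, Finset.sum_mul]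
      congr 1
      refine Finset.sum_congr rfl fun k _ => ?_
      rw [pow_succ]; ring
    have step2 : (∑ k ∈ range (m+1), bb m k * Z^k * Y^(m-k) * Y)
        = (∑ i ∈ range m, bb m (i+1) * Z^(i+1) * Y^(m-i)) + Y^(m+1) := by
      rw [Finset.sum_range_succ']
      congr 1
      · refine Finset.sum_congr rfl fun i hi => ?_
        have hi' := Finset.mem_range.1 hi
        rw [mul_assoc, ← pow_succ, show m - (i+1) + 1 = m - i by omega, mul_assoc]
      · simp [bb_zero, ← pow_succ, show m - 0 + 1 = m + 1 by omega]
    have step3 : ∑ k ∈ range (m+1+1), bb (m+1) k * Z^k * Y^(m+1-k)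
        = ((∑ i ∈ range m, bb m (i+1) * Z^(i+1) * Y^(m-i))
          + ∑ i ∈ range (m+1), X^(2*m) * bb m i * Z^(i+1) * Y^(m-i)) + Y^(m+1) := by
      rw [Finset.sum_range_succ']
      congr 1
      · have expand : ∀ i ∈ range (m+1), bb (m+1) (i+1) * Z^(i+1) * Y^(m+1-(i+1))
            = bb m (i+1) * Z^(i+1) * Y^(m-i) + X^(2*m) * bb m i * Z^(i+1) * Y^(m-i) := by
          intro i hi
          have hi' := Finset.mem_range.1 hi
          rw [bb_pascal m (i+1) (by omega) (by omega)]
          simp only [Nat.add_sub_cancel, Nat.succ_sub_succ, Nat.sub_zero]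
          ring
        rw [Finset.sum_congr rfl expand, Finset.sum_add_distrib]
        congr 1
        rw [Finset.sum_range_succ, bb_top]
        simp
      · simp [bb_zero]
    rw [step1, step2, step3]
    ring

lemma twon_le (n : ℕ) : 2*n ≤ 3*n^2 := by
  have : n ≤ n^2 := Nat.le_self_pow two_ne_zero n
  omega

lemma exp_E1 (n k : ℕ) (hn : 1 ≤ n) (hk : k ≤ 2*n) :
    k*(k-1) + (2*n-1)*(2*n-k) = 3*n^2-2*n + ee n k := by
  have h3 := twon_le n
  rcases Nat.le_total k n with h | h
  · rw [ee, Nat.sub_eq_zero_of_le h]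
    rcases Nat.eq_zero_or_pos k with rfl | hk1
    · simp only [Nat.zero_mul, Nat.zero_add, Nat.sub_zero, Nat.zero_sub]
      zify [show 1 ≤ 2*n by omega, h3]
      ring
    · zify [hk1, h, hk, h3, show 1 ≤ 2*n by omega]
      ring
  · rw [ee, Nat.sub_eq_zero_of_le h]
    zify [show 1 ≤ k by omega, h, hk, h3, show 1 ≤ 2*n by omega]
    ring

lemma exp_A (n : ℕ) (hn : 1 ≤ n) : n*(n-1) + (2*n-1)*n = 3*n^2-2*n := by
  have h3 := twon_le n
  zify [hn, show 1 ≤ 2*n by omega, h3]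
  ring

lemma prod_eval (n : ℕ) (hn : 1 ≤ n) :
    ∏ i ∈ range (2*n), ((X:R)^(2*n-1) + (-1) * X^(2*i)) =
      (-1)^n * X^(3*n^2-2*n) * (Modd n)^2 := by
  have hsplit := Finset.prod_range_add (fun i => (X:R)^(2*n-1) + (-1) * X^(2*i)) n n
  rw [show n + n = 2*n by ring] at hsplit
  have h1 : ∏ i ∈ range n, ((X:R)^(2*n-1) + (-1) * X^(2*i))
      = (-1)^n * X^(n*(n-1)) * Modd n := by
    have hc : ∀ i ∈ range n, ((X:R)^(2*n-1) + (-1) * X^(2*i))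
        = (-1) * ((X^(2*i)) * (1 - X^(2*(n-1-i)+1))) := by
      intro i hi
      have hi' := Finset.mem_range.1 hi
      have hx : (X:R)^(2*i) * X^(2*(n-1-i)+1) = X^(2*n-1) := by
        rw [← pow_add]; congr 1; omega
      rw [← hx]; ring
    rw [Finset.prod_congr rfl hc, Finset.prod_mul_distrib, Finset.prod_mul_distrib,
        Finset.prod_const, Finset.card_range]
    have hx2 : ∏ i ∈ range n, (X:R)^(2*i) = X^(n*(n-1)) := by
      rw [Finset.prod_pow_eq_pow_sum]
      congr 1
      have := Finset.sum_range_id_mul_two n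
      have h2 : ∑ i ∈ range n, 2*i = (∑ i ∈ range n, i) * 2 := by
        rw [Finset.sum_mul]
        exact Finset.sum_congr rfl fun i _ => by ring
      omega
    have href : ∏ i ∈ range n, ((1:R) - X^(2*(n-1-i)+1)) = Modd n :=
      Finset.prod_range_reflect (fun j => (1:R) - X^(2*j+1)) n
    rw [hx2, href, mul_assoc]
  have h2 : ∏ i ∈ range n, ((X:R)^(2*n-1) + (-1) * X^(2*(n+i)))
      = X^((2*n-1)*n) * Modd n := by
    have hc : ∀ i ∈ range n, ((X:R)^(2*n-1) + (-1) * X^(2*(n+i)))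
        = X^(2*n-1) * (1 - X^(2*i+1)) := by
      intro i hi
      have hx : (X:R)^(2*(n+i)) = X^(2*n-1) * X^(2*i+1) := by
        rw [← pow_add]; congr 1; omega
      rw [hx]; ring
    rw [Finset.prod_congr rfl hc, Finset.prod_mul_distrib, Finset.prod_const,
        Finset.card_range, ← pow_mul]
    rfl
  rw [hsplit, h1, h2]
  rw [show ((-1:R)^n * X^(n*(n-1)) * Modd n) * (X^((2*n-1)*n) * Modd n)
      = (-1)^n * (X^(n*(n-1)) * X^((2*n-1)*n)) * (Modd n)^2 by ring, ← pow_add,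
      exp_A n hn]

lemma X_pow_ne (N : ℕ) : (X:R)^N ≠ 0 := pow_ne_zero _ X_ne_zero

lemma star (n : ℕ) (hn : 1 ≤ n) :
    (-1:R)^n * (Modd n)^2 = ∑ k ∈ range (2*n+1), (-1:R)^k * X^(ee n k) * (NN (2*n) k * (Me k)⁻¹) := by
  have h := qbt (2*n) (X^(2*n-1)) (-1)
  rw [prod_eval n hn] at h
  have h2 : ∑ k ∈ range (2*n+1), bb (2*n) k * (-1:R)^k * (X^(2*n-1))^(2*n-k)
      = X^(3*n^2-2*n) * ∑ k ∈ range (2*n+1), (-1:R)^k * X^(ee n k) * (NN (2*n) k * (Me k)⁻¹) := by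
    rw [Finset.mul_sum]
    refine Finset.sum_congr rfl fun k hk => ?_
    have hk' := Finset.mem_range.1 hk
    rw [bb, if_pos (by omega), ← pow_mul]
    rw [show X^(k*(k-1)) * NN (2*n) k * (Me k)⁻¹ * (-1:R)^k * X^((2*n-1)*(2*n-k))
        = (X^(k*(k-1)) * X^((2*n-1)*(2*n-k))) * ((-1:R)^k * (NN (2*n) k * (Me k)⁻¹)) by ring,
      ← pow_add, exp_E1 n k hn (by omega), pow_add]
    ring
  rw [h2] at h
  apply mul_left_cancel₀ (X_pow_ne (3*n^2-2*n))
  rw [← h]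
  ring

lemma neg_one_sq_pow (n : ℕ) : (-1:R)^n * (-1)^n = 1 := by
  rw [← pow_add]; exact Even.neg_one_pow ⟨n, by ring⟩

lemma neg_one_sq_powQ (n : ℕ) : (-1:ℚ)^n * (-1)^n = 1 := by
  rw [← pow_add]; exact Even.neg_one_pow ⟨n, by ring⟩

lemma sum_eval (n : ℕ) (hn : 1 ≤ n) :
    ∑ k ∈ range (2*n+1), (-1:R)^k * X^(ee n k) = (-1)^n * Tt n := by
  have hsplit := Finset.sum_range_add (fun k => (-1:R)^k * X^(ee n k)) n (n+1)
  rw [show n + (n+1) = 2*n+1 by ring] at hsplit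
  rw [hsplit]
  have hA : ∑ k ∈ range n, (-1:R)^k * X^(ee n k)
      = (-1)^n * ∑ i ∈ range n, (-1:R)^(i+1) * X^((i+1)^2) := by
    have h1 : ∑ k ∈ range n, (-1:R)^k * X^(ee n k)
        = ∑ i ∈ range n, (-1:R)^(n-1-i) * X^(ee n (n-1-i)) :=
      (Finset.sum_range_reflect (fun k => (-1:R)^k * X^(ee n k)) n).symm
    rw [h1, Finset.mul_sum]
    refine Finset.sum_congr rfl fun i hi => ?_
    have hi' := Finset.mem_range.1 hi
    have he : ee n (n-1-i) = (i+1)^2 := by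
      rw [ee, Nat.sub_eq_zero_of_le (by omega), show n - (n-1-i) = i+1 by omega]
      simp
    have hs : (-1:R)^(n-1-i) = (-1)^n * (-1)^(i+1) := by
      have h3 := neg_one_sq_pow (i+1)
      calc (-1:R)^(n-1-i) = (-1)^(n-1-i) * ((-1)^(i+1) * (-1)^(i+1)) := by rw [h3, mul_one]
        _ = ((-1)^(n-1-i) * (-1)^(i+1)) * (-1)^(i+1) := by ring
        _ = (-1)^n * (-1)^(i+1) := by
            rw [← pow_add, show n-1-i + (i+1) = n by omega]
    rw [he, hs]
    ring
  have hB : ∑ k ∈ range (n+1), (-1:R)^(n+k) * X^(ee n (n+k))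
      = (-1)^n * (1 + ∑ i ∈ range n, (-1:R)^(i+1) * X^((i+1)^2)) := by
    have hc : ∀ k ∈ range (n+1), (-1:R)^(n+k) * X^(ee n (n+k))
        = (-1)^n * ((-1)^k * X^(k^2)) := by
      intro k hk
      have he : ee n (n+k) = k^2 := by
        rw [ee, show n+k-n = k by omega, Nat.sub_eq_zero_of_le (by omega)]
        simp
      rw [he, pow_add]
      ring
    rw [Finset.sum_congr rfl hc, ← Finset.mul_sum]
    congr 1
    rw [Finset.sum_range_succ']
    simp [add_comm]
  rw [hA, hB, Tt]
  ring

lemma coeff_term (j e m : ℕ) : coeff j ((-1:R)^m * X^e) = (-1:ℚ)^m * (if j = e then 1 else 0) := by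
  have h : ((-1:R))^m = C ((-1:ℚ)^m) := by rw [map_pow, map_neg, map_one]
  rw [h, coeff_C_mul, coeff_X_pow]

lemma coeff_Tt (n j : ℕ) : coeff j (Tt n) =
    (if j = 0 then 1 else 0) + 2 * ∑ k ∈ range n, (-1:ℚ)^(k+1) * (if j = (k+1)^2 then 1 else 0) := by
  rw [Tt, map_add, coeff_one, two_mul, two_mul, map_add, map_sum]
  rw [Finset.sum_congr rfl fun k _ => coeff_term j ((k+1)^2) (k+1)]

lemma theta_congr (n : ℕ) : (X:R)^(n+1) ∣ rescale (-1) thetaSeries - Tt n := by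
  rw [X_pow_dvd_iff]
  intro j hj
  have hj' : j ≤ n := by omega
  rw [map_sub, sub_eq_zero, coeff_rescale, thetaSeries, coeff_mk, coeff_Tt]
  rcases Nat.eq_zero_or_pos j with rfl | hj0
  · simp only [if_pos rfl, pow_zero, one_mul]
    rw [Finset.sum_eq_zero fun k _ => by rw [if_neg (Nat.ne_of_lt (by positivity)), mul_zero]]
    simp [thetaSeries]
  · have hj0' : j ≠ 0 := by omega
    rw [if_neg hj0', if_neg hj0']
    by_cases hsq : ∃ m : ℕ, j = m^2
    · obtain ⟨m, rfl⟩ := hsq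
      have hm1 : 1 ≤ m := by
        rcases Nat.eq_zero_or_pos m with rfl | h; · simp at hj0
        · exact h
      have hmn : m ≤ n := le_trans (Nat.le_self_pow two_ne_zero m) hj'
      rw [if_pos ⟨m, rfl⟩]
      have hsum : ∑ k ∈ range n, (-1:ℚ)^(k+1) * (if m^2 = (k+1)^2 then 1 else 0)
          = (-1)^m := by
        rw [Finset.sum_eq_single (m-1)]
        · rw [show m-1+1 = m by omega, if_pos rfl, mul_one]
        · intro k hk hne
          have : m^2 ≠ (k+1)^2 := by
            intro hh
            exact hne (by
              have := Nat.pow_left_injective (by norm_num) hh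
              omega)
          rw [if_neg this, mul_zero]
        · intro hmem
          exact absurd (Finset.mem_range.2 (by omega)) hmem
      rw [hsum, zero_add]
      rcases Nat.even_or_odd m with he | ho
      · rw [(Nat.even_pow.mpr ⟨he, two_ne_zero⟩).neg_one_pow, he.neg_one_pow]; norm_num
      · rw [(ho.pow).neg_one_pow, ho.neg_one_pow]; norm_num
    · rw [if_neg hsq]
      have hz : ∀ k ∈ range n, (-1:ℚ)^(k+1) * (if j = (k+1)^2 then 1 else 0) = 0 := by
        intro k _
        rw [if_neg (fun h => hsq ⟨k+1, h⟩), mul_zero]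
      rw [Finset.sum_congr rfl hz]
      simp

lemma Me_add (a c : ℕ) : Me (a + c) = Me a * ∏ j ∈ range c, (1 - X^(2*(a+j)+2)) :=
  Finset.prod_range_add _ a c

lemma one_sub_dvd (M t : ℕ) (h : M ≤ t) : (X:R)^M ∣ (1 - X^t) - 1 := by
  have he : (1 - (X:R)^t) - 1 = -(X^t) := by ring
  rw [he]
  exact (dvd_neg).2 (pow_dvd_pow X h)

lemma ineq1 (n k : ℕ) : n+1 ≤ ee n k + (2*k+2) := by
  rcases Nat.le_total k n with h | h
  · rw [ee, Nat.sub_eq_zero_of_le h]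
    zify [h]
    nlinarith [sq_nonneg ((n:ℤ) - k - 1)]
  · rw [ee, Nat.sub_eq_zero_of_le h]
    zify [h]
    nlinarith [sq_nonneg ((k:ℤ) - n)]

lemma ineq2 (n k : ℕ) (hk : k ≤ 2*n) : n+1 ≤ ee n k + (2*(2*n-k)+2) := by
  rcases Nat.le_total k n with h | h
  · rw [ee, Nat.sub_eq_zero_of_le h]
    zify [h, hk]
    nlinarith [sq_nonneg ((n:ℤ) - k)]
  · rw [ee, Nat.sub_eq_zero_of_le h]
    zify [h, hk]
    nlinarith [sq_nonneg ((k:ℤ) - n - 1)]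

lemma star_congr (n : ℕ) (hn : 1 ≤ n) :
    (X:R)^(n+1) ∣ (Modd n)^2 * Me (2*n) - Tt n := by
  have h1 : (-1:R)^n * ((Modd n)^2 * Me (2*n)) =
      ∑ k ∈ range (2*n+1), ((-1:R)^k * X^(ee n k)) *
        (NN (2*n) k * ∏ j ∈ range (2*n-k), (1 - X^(2*(k+j)+2))) := by
    calc (-1:R)^n * ((Modd n)^2 * Me (2*n)) = ((-1)^n * (Modd n)^2) * Me (2*n) := by ring
      _ = (∑ k ∈ range (2*n+1), (-1:R)^k * X^(ee n k) * (NN (2*n) k * (Me k)⁻¹)) * Me (2*n) := by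
          rw [star n hn]
      _ = _ := by
          rw [Finset.sum_mul]
          refine Finset.sum_congr rfl fun k hk => ?_
          have hk' := Finset.mem_range.1 hk
          have hMe : Me (2*n) = Me k * ∏ j ∈ range (2*n-k), (1 - X^(2*(k+j)+2)) := by
            have h' := Me_add k (2*n-k)
            rw [show k + (2*n-k) = 2*n by omega] at h'
            exact h'
          rw [hMe, show (-1:R)^k * X^(ee n k) * (NN (2*n) k * (Me k)⁻¹) *
              (Me k * ∏ j ∈ range (2*n-k), (1 - X^(2*(k+j)+2)))
              = ((-1:R)^k * X^(ee n k)) * (NN (2*n) k * ∏ j ∈ range (2*n-k), (1 - X^(2*(k+j)+2)))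
                * ((Me k)⁻¹ * Me k) by ring, Me_inv_mul, mul_one]
  have h2 : (X:R)^(n+1) ∣
      (∑ k ∈ range (2*n+1), ((-1:R)^k * X^(ee n k)) *
        (NN (2*n) k * ∏ j ∈ range (2*n-k), (1 - X^(2*(k+j)+2))))
      - ∑ k ∈ range (2*n+1), (-1:R)^k * X^(ee n k) := by
    rw [← Finset.sum_sub_distrib]
    refine Finset.dvd_sum fun k hk => ?_
    have hk' := Finset.mem_range.1 hk
    have hfac : (X:R)^(n+1-ee n k) ∣
        (NN (2*n) k * ∏ j ∈ range (2*n-k), (1 - X^(2*(k+j)+2))) - 1 := by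
      have hN : (X:R)^(n+1-ee n k) ∣ NN (2*n) k - 1 := by
        rw [NN]
        refine dprod_one fun i hi => one_sub_dvd _ _ ?_
        have hi' := Finset.mem_range.1 hi
        have := ineq2 n k (by omega)
        omega
      have hT : (X:R)^(n+1-ee n k) ∣ (∏ j ∈ range (2*n-k), (1 - X^(2*(k+j)+2))) - 1 := by
        refine dprod_one fun i hi => one_sub_dvd _ _ ?_
        have := ineq1 n k
        omega
      have := dsub hN hT
      simpa using this
    obtain ⟨c, hc⟩ := hfac
    have heq : ((-1:R)^k * X^(ee n k)) *
        (NN (2*n) k * ∏ j ∈ range (2*n-k), (1 - X^(2*(k+j)+2))) - (-1:R)^k * X^(ee n k)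
        = (X^(ee n k) * X^(n+1-ee n k)) * ((-1)^k * c) := by
      rw [show (X:R)^(ee n k) * X^(n+1-ee n k) * ((-1)^k * c)
          = ((-1)^k * X^(ee n k)) * (X^(n+1-ee n k) * c) by ring, ← hc]
      ring
    rw [heq, ← pow_add]
    exact Dvd.dvd.mul_right (pow_dvd_pow X (by have := ineq1 n k; omega)) _
  have h3 : (X:R)^(n+1) ∣ (-1:R)^n * ((Modd n)^2 * Me (2*n)) - (-1)^n * Tt n := by
    rw [h1, ← sum_eval n hn]
    exact h2
  have h4 : (Modd n)^2 * Me (2*n) - Tt n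
      = (-1:R)^n * ((-1:R)^n * ((Modd n)^2 * Me (2*n)) - (-1)^n * Tt n) := by
    have hsq := neg_one_sq_pow n
    calc (Modd n)^2 * Me (2*n) - Tt n
        = ((-1:R)^n * (-1)^n) * ((Modd n)^2 * Me (2*n)) - ((-1:R)^n * (-1)^n) * Tt n := by
          rw [hsq]; ring
      _ = _ := by ring
  rw [h4]
  exact h3.mul_left _

lemma prod_Icc_eq (f : ℕ → R) (n : ℕ) : ∏ j ∈ Icc 1 n, f j = ∏ j ∈ range n, f (j+1) := by
  induction n with
  | zero => simp
  | succ n ih => rw [Finset.prod_Icc_succ_top (by omega), ih, Finset.prod_range_succ]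

lemma cc_Mm (n : ℕ) : constantCoeff (Mm n) = 1 := by
  rw [Mm, map_prod]
  exact Finset.prod_eq_one fun j _ => by simp

lemma Mm_inv_mul (n : ℕ) : (Mm n)⁻¹ * Mm n = 1 :=
  PowerSeries.inv_mul_cancel _ (by rw [cc_Mm]; exact one_ne_zero)

lemma Mm_mul_inv (n : ℕ) : Mm n * (Mm n)⁻¹ = 1 :=
  PowerSeries.mul_inv_cancel _ (by rw [cc_Mm]; exact one_ne_zero)

lemma Mm_split (n : ℕ) : Mm (2*n) = Modd n * Me n := by
  induction n with
  | zero => simp [Mm, Modd, Me]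
  | succ n ih =>
    have h2 : 2*(n+1) = 2*n+1+1 := by ring
    rw [h2, Mm, Finset.prod_range_succ, Finset.prod_range_succ, ← Mm, ih]
    rw [show Modd (n+1) = Modd n * (1 - X^(2*n+1)) from Finset.prod_range_succ _ n,
        show Me (n+1) = Me n * (1 - X^(2*n+2)) from Finset.prod_range_succ _ n,
        show 2*n+1+1 = 2*n+2 by ring]
    ring

lemma cc_rescale_theta : constantCoeff (rescale (-1) thetaSeries) = 1 := by
  have := coeff_rescale thetaSeries (-1:ℚ) 0
  rw [coeff_zero_eq_constantCoeff] at this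
  rw [this]
  simp [thetaSeries, coeff_zero_eq_constantCoeff]

lemma key (n : ℕ) :
    (X:R)^(n+1) ∣ rescale (-1) thetaSeries * (∏ j ∈ Icc 1 n, ((1:R) + X^j) * (1 - X^j)⁻¹) - 1 := by
  rcases Nat.eq_zero_or_pos n with rfl | hn
  · rw [show (0:ℕ)+1 = 1 from rfl, pow_one, X_dvd_iff]
    simp [cc_rescale_theta]
  set θ := rescale (-1) thetaSeries with hθ
  set F := ∏ j ∈ Icc 1 n, ((1:R) + X^j) * (1 - X^j)⁻¹ with hF
  have hFM : F * (Mm n * Mm n) = Me n := by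
    rw [hF, prod_Icc_eq (fun j => ((1:R) + X^j) * (1 - X^j)⁻¹) n, Mm, Me,
      ← Finset.prod_mul_distrib, ← Finset.prod_mul_distrib]
    refine Finset.prod_congr rfl fun j _ => ?_
    have hinv : ((1:R) - X^(j+1))⁻¹ * (1 - X^(j+1)) = 1 :=
      PowerSeries.inv_mul_cancel _ (by simp)
    calc ((1:R)+X^(j+1)) * (1-X^(j+1))⁻¹ * ((1-X^(j+1)) * (1-X^(j+1)))
        = ((1-X^(j+1))⁻¹ * (1-X^(j+1))) * ((1+X^(j+1)) * (1-X^(j+1))) := by ring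
      _ = (1+X^(j+1)) * (1-X^(j+1)) := by rw [hinv, one_mul]
      _ = 1 - X^(2*j+2) := by
          have hx : (X:R)^(j+1) * X^(j+1) = X^(2*j+2) := by
            rw [← pow_add]; congr 1; omega
          rw [← hx]; ring
  set tE := ∏ j ∈ range n, ((1:R) - X^(2*(n+j)+2)) with htE
  set tM := ∏ j ∈ range n, ((1:R) - X^(n+j+1)) with htM
  have hMe2 : Me (2*n) = Me n * tE := by
    have h' := Finset.prod_range_add (fun j => (1:R) - X^(2*j+2)) n n
    rw [show n + n = 2*n by ring] at h'
    rw [Me, h', htE]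
    rfl
  have hMm2 : Mm (2*n) = Mm n * tM := by
    have h' := Finset.prod_range_add (fun j => (1:R) - X^(j+1)) n n
    rw [show n + n = 2*n by ring] at h'
    rw [Mm, h', htM]
    rfl
  have tgt : (X:R)^(n+1) ∣ θ * Me n - Mm n * Mm n := by
    have hth : (X:R)^(n+1) ∣ θ - (Modd n)^2 * Me (2*n) := by
      have heq : θ - (Modd n)^2 * Me (2*n)
          = (θ - Tt n) - ((Modd n)^2 * Me (2*n) - Tt n) := by ring
      rw [heq]
      exact dvd_sub (theta_congr n) (star_congr n hn)
    have h2 : (X:R)^(n+1) ∣ θ * Me n - (Modd n)^2 * Me (2*n) * Me n :=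
      dsub hth (by simp)
    have hrw : (Modd n)^2 * Me (2*n) * Me n = (Mm n * Mm n) * (tM * tM * tE) := by
      calc (Modd n)^2 * Me (2*n) * Me n = (Modd n * Me n)^2 * tE := by rw [hMe2]; ring
        _ = (Mm (2*n))^2 * tE := by rw [Mm_split]
        _ = (Mm n * Mm n) * (tM * tM * tE) := by rw [hMm2]; ring
    have tM1 : (X:R)^(n+1) ∣ tM - 1 := by
      rw [htM]
      exact dprod_one fun i hi => one_sub_dvd _ _ (by omega)
    have tE1 : (X:R)^(n+1) ∣ tE - 1 := by
      rw [htE]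
      exact dprod_one fun i hi => one_sub_dvd _ _ (by omega)
    have htail : (X:R)^(n+1) ∣ (tM * tM * tE) - 1 := by
      have := dsub (dsub tM1 tM1) tE1
      simpa using this
    have heq2 : θ * Me n - Mm n * Mm n
        = (θ * Me n - (Modd n)^2 * Me (2*n) * Me n)
          + ((Mm n * Mm n) * (tM * tM * tE) - (Mm n * Mm n) * 1) := by
      rw [hrw]; ring
    rw [heq2]
    exact dvd_add h2 (dsub (by simp) htail)
  have hu : (Mm n * Mm n) * ((Mm n)⁻¹ * (Mm n)⁻¹) = 1 := by
    calc (Mm n * Mm n) * ((Mm n)⁻¹ * (Mm n)⁻¹)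
        = (Mm n * (Mm n)⁻¹) * (Mm n * (Mm n)⁻¹) := by ring
      _ = 1 := by rw [Mm_mul_inv, one_mul]
  apply unit_cancel hu
  have : θ * F * (Mm n * Mm n) = θ * Me n := by rw [mul_assoc, hFM]
  rw [this, one_mul]
  exact tgt

lemma cc_theta : constantCoeff thetaSeries = 1 := by
  rw [← coeff_zero_eq_constantCoeff_apply, thetaSeries, coeff_mk]
  simp

lemma cc_F (n : ℕ) :
    constantCoeff (∏ j ∈ Icc 1 n, ((1:R) + X^j) * (1 - X^j)⁻¹) = 1 := by
  rw [map_prod]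
  refine Finset.prod_eq_one fun j hj => ?_
  have hj1 : 1 ≤ j := (Finset.mem_Icc.1 hj).1
  rw [map_mul, PowerSeries.constantCoeff_inv]
  simp only [map_add, map_sub, map_one]
  have h0 : constantCoeff ((X:R)^j) = 0 := by
    rw [map_pow, constantCoeff_X, zero_pow (by omega)]
  rw [h0]
  norm_num

lemma bt (B : R) (hB : constantCoeff B = 1) (n : ℕ) :
    ∑ j ∈ range (n+1), (-1:ℚ)^(n-j) * ((n+1).choose (j+1) : ℚ) * coeff n (B^j)
      = (-1:ℚ)^n * coeff n B⁻¹ := by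
  have hBne : constantCoeff B ≠ 0 := by rw [hB]; exact one_ne_zero
  have hBinv : B * B⁻¹ = 1 := PowerSeries.mul_inv_cancel _ hBne
  set S : R := ∑ j ∈ range (n+1), C ((-1:ℚ)^(n-j) * ((n+1).choose (j+1) : ℚ)) * B^j with hS
  have hcoeff : ∑ j ∈ range (n+1), (-1:ℚ)^(n-j) * ((n+1).choose (j+1):ℚ) * coeff n (B^j)
      = coeff n S := by
    rw [hS, map_sum]
    exact Finset.sum_congr rfl fun j _ => (coeff_C_mul _ _ _).symm
  have hC : ∀ m : ℕ, (C) ((-1:ℚ)^m) = (-1:R)^m := fun m => by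
    rw [map_pow, map_neg, map_one]
  have hSB : S * B = (B - 1)^(n+1) + C ((-1:ℚ)^n) := by
    have hpow : (B - 1)^(n+1)
        = ∑ k ∈ range (n+2), B^k * (-1:R)^(n+1-k) * ((n+1).choose k : R) := by
      rw [sub_eq_add_neg, add_pow]
    rw [hpow, Finset.sum_range_succ']
    simp only [pow_zero, Nat.choose_zero_right, Nat.cast_one, mul_one, one_mul, Nat.sub_zero,
      Nat.succ_sub_succ]
    rw [hS, Finset.sum_mul]
    have hterm : ∀ j ∈ range (n+1),
        C ((-1:ℚ)^(n-j) * ((n+1).choose (j+1) : ℚ)) * B^j * B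
        = B^(j+1) * (-1:R)^(n-j) * ((n+1).choose (j+1) : R) := by
      intro j _
      rw [map_mul, hC, map_natCast, pow_succ]
      ring
    rw [Finset.sum_congr rfl hterm, hC]
    have : (-1:R)^(n+1) + (-1:R)^n = 0 := by rw [pow_succ]; ring
    -- goal: Σ = Σ + (-1)^{n+1} + (-1)^n
    rw [add_assoc, this, add_zero]
  have hSrw : S = (B - 1)^(n+1) * B⁻¹ + C ((-1:ℚ)^n) * B⁻¹ := by
    calc S = S * (B * B⁻¹) := by rw [hBinv, mul_one]
      _ = (S * B) * B⁻¹ := by ring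
      _ = ((B - 1)^(n+1) + C ((-1:ℚ)^n)) * B⁻¹ := by rw [hSB]
      _ = _ := by ring
  have hzero : coeff n ((B - 1)^(n+1) * B⁻¹) = 0 := by
    have hdvd : (X:R) ∣ B - 1 := by
      rw [X_dvd_iff, map_sub, hB, map_one, sub_self]
    have h2 : (X:R)^(n+1) ∣ (B - 1)^(n+1) * B⁻¹ :=
      Dvd.dvd.mul_right (pow_dvd_pow_of_dvd hdvd (n+1)) _
    exact X_pow_dvd_iff.1 h2 n (Nat.lt_succ_self n)
  rw [hcoeff, hSrw, map_add, hzero, zero_add, coeff_C_mul]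


end

end SqOvAux

open SqOvAux in
/-- **Binomial transform between sums of squares and overpartitions**
(Proposition 6.7 of the paper). -/
theorem sq_overpartition_transform (r : ℕ) (hr : 1 ≤ r) (n : ℕ) :
    numSqReps r n =
      ∑ j ∈ Finset.range (n + 1),
        (-1 : ℚ) ^ (n - j) * ((n + 1).choose (j + 1) : ℚ) * overPart (r * j) n ∧
    overPart r n =
      ∑ j ∈ Finset.range (n + 1),
        (-1 : ℚ) ^ (n - j) * ((n + 1).choose (j + 1) : ℚ) * numSqReps (r * j) n := by

  set F : R := ∏ j ∈ Icc 1 n, ((1:R) + X^j) * (1 - X^j)⁻¹ with hF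
  set θr : R := rescale (-1) thetaSeries with hθr
  have ccF : constantCoeff F = 1 := cc_F n
  have ccFr : constantCoeff (F^r) = 1 := by rw [map_pow, ccF, one_pow]
  have ccT : constantCoeff (thetaSeries^r) = 1 := by rw [map_pow, cc_theta, one_pow]
  have ccθr : constantCoeff (θr^r) = 1 := by rw [map_pow, cc_rescale_theta, one_pow]
  have hKr : (X:R)^(n+1) ∣ θr^r * F^r - 1 := by
    have := dpow (key n) r
    rw [mul_pow, one_pow] at this
    exact this
  have hFrinv : F^r * (F^r)⁻¹ = 1 := PowerSeries.mul_inv_cancel _ (by rw [ccFr]; exact one_ne_zero)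
  have hθrinv : θr^r * (θr^r)⁻¹ = 1 := PowerSeries.mul_inv_cancel _ (by rw [ccθr]; exact one_ne_zero)
  have h1 : (X:R)^(n+1) ∣ θr^r - (F^r)⁻¹ := by
    have h := hKr.mul_right (F^r)⁻¹
    rw [sub_mul, one_mul, mul_assoc, hFrinv, mul_one] at h
    exact h
  have h2 : (X:R)^(n+1) ∣ F^r - (θr^r)⁻¹ := by
    have h := hKr.mul_right (θr^r)⁻¹
    rw [sub_mul, one_mul, show θr^r * F^r * (θr^r)⁻¹ = F^r * (θr^r * (θr^r)⁻¹) by ring,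
      hθrinv, mul_one] at h
    exact h
  have hres : θr^r = rescale (-1) (thetaSeries^r) := by rw [hθr, ← map_pow]
  have hresinv : (θr^r)⁻¹ = rescale (-1) ((thetaSeries^r)⁻¹) := by
    symm
    rw [PowerSeries.eq_inv_iff_mul_eq_one (by rw [ccθr]; exact one_ne_zero)]
    rw [hres, ← map_mul, PowerSeries.inv_mul_cancel _ (by rw [ccT]; exact one_ne_zero), map_one]
  constructor
  · have hbt := bt (F^r) ccFr n
    have hov : ∀ j : ℕ, overPart (r * j) n = coeff n ((F^r)^j) := by
      intro j
      rw [overPart, ← pow_mul, hF]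
    calc numSqReps r n = coeff n (thetaSeries^r) := rfl
      _ = (-1:ℚ)^n * ((-1:ℚ)^n * coeff n (thetaSeries^r)) := by
          rw [← mul_assoc, neg_one_sq_powQ, one_mul]
      _ = (-1:ℚ)^n * coeff n (rescale (-1) (thetaSeries^r)) := by rw [coeff_rescale]
      _ = (-1:ℚ)^n * coeff n (F^r)⁻¹ := by rw [← hres, coeff_eq_of_dvd h1]
      _ = ∑ j ∈ range (n+1), (-1:ℚ)^(n-j) * ((n+1).choose (j+1) : ℚ) * coeff n ((F^r)^j) := hbt.symm
      _ = _ := Finset.sum_congr rfl fun j _ => by rw [hov j]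
  · have hbt := bt (thetaSeries^r) ccT n
    have hnum : ∀ j : ℕ, numSqReps (r * j) n = coeff n ((thetaSeries^r)^j) := by
      intro j
      rw [numSqReps, ← pow_mul]
    calc overPart r n = coeff n (F^r) := by rw [overPart, hF]
      _ = coeff n (θr^r)⁻¹ := coeff_eq_of_dvd h2
      _ = coeff n (rescale (-1) ((thetaSeries^r)⁻¹)) := by rw [hresinv]
      _ = (-1:ℚ)^n * coeff n (thetaSeries^r)⁻¹ := by rw [coeff_rescale]
      _ = ∑ j ∈ range (n+1), (-1:ℚ)^(n-j) * ((n+1).choose (j+1) : ℚ) * coeff n ((thetaSeries^r)^j) := hbt.symm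
      _ = _ := Finset.sum_congr rfl fun j _ => by rw [hnum j]
end

section
/- Let A be a commutative ℚ-algebra, let ρ be a formal power series over A with constant coefficient 1, and let α, β be integers. Suppose Q and Q′ are formal power series over A with constant coefficient 1 satisfying Q = ρ(t·Q(t)^α) and Q′ = ρ(t·Q′(t)^{α−β}) (substitution of the constant-term-zero series t·Q^α, resp. t·(Q′)^{α−β}, into ρ; integer powers taken in the unit group of A[[t]]). Then the substitution of t·Q′(t)^{−β} into t·Q(t)^β equals t; that is, t·Q′(t)^{−β} is the compositional inverse of t·Q(t)^β, so that (Q^β)* = (Q′)^{−β} where * is the star operation f*(t) := (t f(t))⟨−1⟩/t. -/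
open PowerSeries Finset

namespace SubstAux

variable {A : Type*} [CommRing A]

lemma coeff_pow_eq_zero {G : PowerSeries A} (hG : constantCoeff G = 0)
    {n k : ℕ} (h : n < k) : coeff n (G ^ k) = 0 :=
  X_pow_dvd_iff.mp (pow_dvd_pow_of_dvd (X_dvd_iff.mpr hG) k) n h

lemma coeff_substInto (G f : PowerSeries A) (n : ℕ) :
    coeff n (substInto G f)
      = ∑ k ∈ range (n + 1), coeff k f * coeff n (G ^ k) := by
  simp [substInto]

lemma coeff_substInto_of_lt {G : PowerSeries A} (hG : constantCoeff G = 0)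
    (f : PowerSeries A) {i N : ℕ} (hiN : i < N) :
    coeff i (substInto G f) = ∑ k ∈ range N, coeff k f * coeff i (G ^ k) := by
  rw [coeff_substInto]
  refine Finset.sum_subset (Finset.range_subset_range.mpr (by omega)) ?_
  intro k hk hk'
  simp only [mem_range] at hk hk'
  rw [coeff_pow_eq_zero hG (by omega), mul_zero]

lemma substInto_add (G f g : PowerSeries A) :
    substInto G (f + g) = substInto G f + substInto G g := by
  ext n
  simp [coeff_substInto, add_mul, Finset.sum_add_distrib]

lemma substInto_one (G : PowerSeries A) : substInto G 1 = 1 := by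
  ext n
  rw [coeff_substInto]
  rw [Finset.sum_eq_single 0]
  · simp
  · intro k hk hk0
    simp [coeff_one, hk0]
  · simp

lemma substInto_zero (G : PowerSeries A) : substInto G 0 = 0 := by
  ext n; simp [coeff_substInto]

lemma substInto_X {G : PowerSeries A} (hG : constantCoeff G = 0) :
    substInto G X = G := by
  ext n
  rw [coeff_substInto]
  rw [Finset.sum_eq_single 1]
  · simp
  · intro k hk hk1
    simp [coeff_X, hk1]
  · intro h
    simp only [mem_range, not_lt] at h
    have hn : n = 0 := by omega
    subst hn
    simp [coeff_zero_eq_constantCoeff, hG]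

lemma substInto_mul {G : PowerSeries A} (hG : constantCoeff G = 0) (f g : PowerSeries A) :
    substInto G (f * g) = substInto G f * substInto G g := by
  ext n
  have common : ∀ h : ℕ → ℕ → A,
    True := fun _ => trivial
  -- LHS
  have hL : coeff n (substInto G (f * g))
      = ∑ k ∈ range (n+1), ∑ l ∈ range (n+1),
          coeff k f * coeff l g * coeff n (G ^ (k + l)) := by
    rw [coeff_substInto]
    have step1 : ∀ m ∈ range (n+1),
        coeff m (f * g) * coeff n (G ^ m)
          = ∑ p ∈ antidiagonal m, coeff p.1 f * coeff p.2 g * coeff n (G ^ (p.1 + p.2)) := by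
      intro m hm
      rw [PowerSeries.coeff_mul, Finset.sum_mul]
      refine Finset.sum_congr rfl fun p hp => ?_
      rw [Finset.HasAntidiagonal.mem_antidiagonal] at hp
      rw [hp]
    rw [Finset.sum_congr rfl step1]
    rw [← Finset.sum_biUnion]
    · have hsub : (range (n+1)).biUnion (fun m => antidiagonal m)
          ⊆ range (n+1) ×ˢ range (n+1) := by
        intro p hp
        simp only [Finset.mem_biUnion, mem_range, Finset.HasAntidiagonal.mem_antidiagonal] at hp
        obtain ⟨m, hm, hpm⟩ := hp
        simp only [Finset.mem_product, mem_range]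
        omega
      rw [Finset.sum_subset hsub]
      · rw [Finset.sum_product]
      · intro p hp hp'
        simp only [Finset.mem_product, mem_range] at hp
        simp only [Finset.mem_biUnion, mem_range, Finset.HasAntidiagonal.mem_antidiagonal] at hp'
        have : n < p.1 + p.2 := by
          by_contra hc
          exact hp' ⟨p.1 + p.2, by omega, rfl⟩
        rw [coeff_pow_eq_zero hG this, mul_zero]
    · intro a _ b _ hab
      simp only [Finset.disjoint_left, Finset.HasAntidiagonal.mem_antidiagonal]
      intro p h1 h2
      exact hab (h1 ▸ h2 ▸ rfl)
  -- RHS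
  have hR : coeff n (substInto G f * substInto G g)
      = ∑ k ∈ range (n+1), ∑ l ∈ range (n+1),
          coeff k f * coeff l g * coeff n (G ^ (k + l)) := by
    rw [PowerSeries.coeff_mul]
    have step1 : ∀ q ∈ antidiagonal n,
        coeff q.1 (substInto G f) * coeff q.2 (substInto G g)
          = ∑ k ∈ range (n+1), ∑ l ∈ range (n+1),
              coeff k f * coeff l g * (coeff q.1 (G ^ k) * coeff q.2 (G ^ l)) := by
      intro q hq
      rw [Finset.HasAntidiagonal.mem_antidiagonal] at hq
      rw [coeff_substInto_of_lt hG f (by omega : q.1 < n+1),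
          coeff_substInto_of_lt hG g (by omega : q.2 < n+1),
          Finset.sum_mul_sum]
      refine Finset.sum_congr rfl fun k _ => Finset.sum_congr rfl fun l _ => ?_
      ring
    rw [Finset.sum_congr rfl step1, Finset.sum_comm]
    refine Finset.sum_congr rfl fun k _ => ?_
    rw [Finset.sum_comm]
    refine Finset.sum_congr rfl fun l _ => ?_
    rw [pow_add, PowerSeries.coeff_mul, Finset.mul_sum]
  rw [hL, hR]

lemma substInto_pow {G : PowerSeries A} (hG : constantCoeff G = 0) (f : PowerSeries A) :
    ∀ k : ℕ, substInto G (f ^ k) = (substInto G f) ^ k := by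
  intro k
  induction k with
  | zero => simpa using substInto_one G
  | succ k ih => rw [pow_succ, substInto_mul hG, ih, pow_succ]

lemma constantCoeff_substInto {G f : PowerSeries A} (hf : constantCoeff f = 0) :
    constantCoeff (substInto G f) = 0 := by
  rw [← coeff_zero_eq_constantCoeff_apply, coeff_substInto, Finset.sum_range_one, pow_zero]
  simp [coeff_zero_eq_constantCoeff, hf]

lemma substInto_comp {G H : PowerSeries A} (hG : constantCoeff G = 0)
    (hH : constantCoeff H = 0) (f : PowerSeries A) :
    substInto H (substInto G f) = substInto (substInto H G) f := by
  ext n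
  rw [coeff_substInto, coeff_substInto]
  have step1 : ∀ k ∈ range (n+1),
      coeff k (substInto G f) * coeff n (H ^ k)
        = ∑ j ∈ range (n+1), coeff j f * coeff k (G ^ j) * coeff n (H ^ k) := by
    intro k hk
    simp only [mem_range] at hk
    rw [coeff_substInto_of_lt hG f (by omega : k < n+1), Finset.sum_mul]
  rw [Finset.sum_congr rfl step1, Finset.sum_comm]
  refine Finset.sum_congr rfl fun j _ => ?_
  rw [← substInto_pow hH G j,
      coeff_substInto_of_lt hH (G ^ j) (by omega : n < n+1)]
  rw [Finset.mul_sum]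
  refine Finset.sum_congr rfl fun k _ => ?_
  ring

noncomputable def substHom {G : PowerSeries A} (hG : constantCoeff G = 0) :
    PowerSeries A →+* PowerSeries A where
  toFun := substInto G
  map_one' := substInto_one G
  map_mul' := substInto_mul hG
  map_zero' := substInto_zero G
  map_add' := substInto_add G

lemma dvd_substInto_sub {G₁ G₂ : PowerSeries A} (hG₁ : constantCoeff G₁ = 0)
    (hG₂ : constantCoeff G₂ = 0) {m : ℕ}
    (hd : (X : PowerSeries A) ^ m ∣ G₁ - G₂) (ρ : PowerSeries A) :
    (X : PowerSeries A) ^ m ∣ substInto G₁ ρ - substInto G₂ ρ := by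
  rw [X_pow_dvd_iff]
  intro i hi
  rw [map_sub, coeff_substInto, coeff_substInto, ← Finset.sum_sub_distrib]
  refine Finset.sum_eq_zero fun k _ => ?_
  have h1 : (X : PowerSeries A) ^ m ∣ G₁ ^ k - G₂ ^ k :=
    dvd_trans hd (sub_dvd_pow_sub_pow _ _ k)
  have h2 := X_pow_dvd_iff.mp h1 i hi
  rw [map_sub, sub_eq_zero] at h2
  rw [h2, sub_self]

lemma dvd_units_zpow_sub (d : PowerSeries A) (u v : (PowerSeries A)ˣ)
    (h : d ∣ (u : PowerSeries A) - v) (γ : ℤ) :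
    d ∣ ((u ^ γ : (PowerSeries A)ˣ) : PowerSeries A) - ((v ^ γ : (PowerSeries A)ˣ) : PowerSeries A) := by
  have hpow : ∀ k : ℕ, d ∣ ((u ^ k : (PowerSeries A)ˣ) : PowerSeries A)
      - ((v ^ k : (PowerSeries A)ˣ) : PowerSeries A) := by
    intro k
    rw [Units.val_pow_eq_pow_val, Units.val_pow_eq_pow_val]
    exact dvd_trans h (sub_dvd_pow_sub_pow _ _ k)
  have hinv : ∀ u v : (PowerSeries A)ˣ, d ∣ (u : PowerSeries A) - v →
      d ∣ ((u⁻¹ : (PowerSeries A)ˣ) : PowerSeries A) - ((v⁻¹ : (PowerSeries A)ˣ) : PowerSeries A) := by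
    intro u v h
    have key : ((u⁻¹ : (PowerSeries A)ˣ) : PowerSeries A) - ((v⁻¹ : (PowerSeries A)ˣ) : PowerSeries A)
        = ((u⁻¹ : (PowerSeries A)ˣ) : PowerSeries A) * ((v : PowerSeries A) - u)
            * ((v⁻¹ : (PowerSeries A)ˣ) : PowerSeries A) := by
      have h1 : (u : PowerSeries A) * ((u⁻¹ : (PowerSeries A)ˣ) : PowerSeries A) = 1 := u.mul_inv
      have h2 : (v : PowerSeries A) * ((v⁻¹ : (PowerSeries A)ˣ) : PowerSeries A) = 1 := v.mul_inv
      linear_combination ((v⁻¹ : (PowerSeries A)ˣ) : PowerSeries A) * h1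
        - ((u⁻¹ : (PowerSeries A)ˣ) : PowerSeries A) * h2
    rw [key]
    exact Dvd.dvd.mul_right (Dvd.dvd.mul_left (dvd_sub_comm.mp h) _) _
  match γ with
  | Int.ofNat k =>
    simpa [zpow_natCast] using hpow k
  | Int.negSucc k =>
    simpa [zpow_negSucc] using hinv (u ^ (k+1)) (v ^ (k+1)) (hpow (k+1))

lemma uniq (ρ : PowerSeries A) {s : PowerSeries A} (hsX : (X : PowerSeries A) ∣ s)
    (γ : ℤ) (Y Z : (PowerSeries A)ˣ)
    (hY : (Y : PowerSeries A) = substInto (s * ((Y ^ γ : (PowerSeries A)ˣ) : PowerSeries A)) ρ)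
    (hZ : (Z : PowerSeries A) = substInto (s * ((Z ^ γ : (PowerSeries A)ˣ) : PowerSeries A)) ρ) :
    (Y : PowerSeries A) = Z := by
  have hs : constantCoeff s = 0 := X_dvd_iff.mp hsX
  obtain ⟨w, hw⟩ := hsX
  have key : ∀ n : ℕ, (X : PowerSeries A) ^ n ∣ (Y : PowerSeries A) - Z := by
    intro n
    induction n with
    | zero => simpa using one_dvd _
    | succ n ih =>
      obtain ⟨e, he⟩ := dvd_units_zpow_sub _ Y Z ih γ
      have h2 : (X : PowerSeries A) ^ (n+1)
          ∣ s * ((Y ^ γ : (PowerSeries A)ˣ) : PowerSeries A)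
            - s * ((Z ^ γ : (PowerSeries A)ˣ) : PowerSeries A) := by
        refine ⟨w * e, ?_⟩
        rw [← mul_sub, he, hw]
        ring
      have cs : ∀ u : (PowerSeries A)ˣ,
          constantCoeff (s * ((u ^ γ : (PowerSeries A)ˣ) : PowerSeries A)) = 0 := by
        intro u; rw [map_mul, hs, zero_mul]
      have := dvd_substInto_sub (cs Y) (cs Z) h2 ρ
      rwa [← hY, ← hZ] at this
  have hzero : (Y : PowerSeries A) - Z = 0 := by
    ext i
    rw [map_zero]
    exact X_pow_dvd_iff.mp (key (i+1)) i (Nat.lt_succ_self i)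
  exact sub_eq_zero.mp hzero

end SubstAux

/-- **The star of a power of a general series**: if `Q = ρ(t·Q^α)` and
`Q′ = ρ(t·Q′^{α−β})`, then `t·Q′(t)^{−β}` is the compositional inverse of `t·Q(t)^β`,
i.e. `(Q^β)* = Q′^{−β}`. Powers are taken in the unit group of `A[[t]]`, via units
`uρ`, `uQ`, `uQ'` lying over `ρ`, `Q`, `Q′`. -/
theorem general_series_star (A : Type*) [CommRing A] [Algebra ℚ A] (α β : ℤ)
    (uρ uQ uQ' : (PowerSeries A)ˣ)
    (hρ : PowerSeries.constantCoeff (uρ : PowerSeries A) = 1)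
    (hQc : PowerSeries.constantCoeff (uQ : PowerSeries A) = 1)
    (hQ'c : PowerSeries.constantCoeff (uQ' : PowerSeries A) = 1)
    (hQ : (uQ : PowerSeries A) =
      substInto (PowerSeries.X * ((uQ ^ α : (PowerSeries A)ˣ) : PowerSeries A))
        (uρ : PowerSeries A))
    (hQ' : (uQ' : PowerSeries A) =
      substInto (PowerSeries.X * ((uQ' ^ (α - β) : (PowerSeries A)ˣ) : PowerSeries A))
        (uρ : PowerSeries A)) :
    substInto (PowerSeries.X * ((uQ' ^ (-β) : (PowerSeries A)ˣ) : PowerSeries A))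
        (PowerSeries.X * ((uQ ^ β : (PowerSeries A)ˣ) : PowerSeries A)) =
      PowerSeries.X := by
  set s : PowerSeries A := X * ((uQ' ^ (-β) : (PowerSeries A)ˣ) : PowerSeries A) with hsdef
  have hs : constantCoeff s = 0 := by
    rw [hsdef, map_mul, constantCoeff_X, zero_mul]
  have hsX : (X : PowerSeries A) ∣ s := ⟨_, hsdef⟩
  let φ : PowerSeries A →+* PowerSeries A := SubstAux.substHom hs
  let V : (PowerSeries A)ˣ := Units.map φ.toMonoidHom uQ
  have hzpow : ∀ γ : ℤ,
      substInto s ((uQ ^ γ : (PowerSeries A)ˣ) : PowerSeries A)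
        = ((V ^ γ : (PowerSeries A)ˣ) : PowerSeries A) := by
    intro γ
    have h1 : φ ((uQ ^ γ : (PowerSeries A)ˣ) : PowerSeries A)
        = ((Units.map φ.toMonoidHom (uQ ^ γ) : (PowerSeries A)ˣ) : PowerSeries A) :=
      (Units.coe_map _ _).symm
    rw [map_zpow] at h1
    exact h1
  have hXα : constantCoeff (X * ((uQ ^ α : (PowerSeries A)ˣ) : PowerSeries A)) = 0 := by
    rw [map_mul, constantCoeff_X, zero_mul]
  have hVval : (V : PowerSeries A) = substInto s (uQ : PowerSeries A) := rfl
  have hVeq : (V : PowerSeries A)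
      = substInto (s * ((V ^ α : (PowerSeries A)ˣ) : PowerSeries A)) (uρ : PowerSeries A) := by
    calc (V : PowerSeries A) = substInto s (uQ : PowerSeries A) := hVval
      _ = substInto s (substInto (X * ((uQ ^ α : (PowerSeries A)ˣ) : PowerSeries A))
            (uρ : PowerSeries A)) := by rw [← hQ]
      _ = substInto (substInto s (X * ((uQ ^ α : (PowerSeries A)ˣ) : PowerSeries A)))
            (uρ : PowerSeries A) := SubstAux.substInto_comp hXα hs _
      _ = substInto (s * ((V ^ α : (PowerSeries A)ˣ) : PowerSeries A)) (uρ : PowerSeries A) := by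
            rw [SubstAux.substInto_mul hs, SubstAux.substInto_X hs, hzpow α]
  have hQ'eq : (uQ' : PowerSeries A)
      = substInto (s * ((uQ' ^ α : (PowerSeries A)ˣ) : PowerSeries A)) (uρ : PowerSeries A) := by
    have h2 : s * ((uQ' ^ α : (PowerSeries A)ˣ) : PowerSeries A)
        = X * ((uQ' ^ (α - β) : (PowerSeries A)ˣ) : PowerSeries A) := by
      rw [hsdef, mul_assoc, ← Units.val_mul, ← zpow_add, neg_add_eq_sub]
    rw [h2]
    exact hQ'
  have hVU : V = uQ' :=
    Units.ext (SubstAux.uniq (uρ : PowerSeries A) hsX α V uQ' hVeq hQ'eq)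
  rw [SubstAux.substInto_mul hs, SubstAux.substInto_X hs, hzpow β, hVU, hsdef,
      mul_assoc, ← Units.val_mul, ← zpow_add, neg_add_cancel, zpow_zero, Units.val_one, mul_one]
end

section
/- Let α, β, t be complex numbers with α ≠ 0 and |t| < 1/(e·|α|). Then the series Σ_{n=1}^{∞} β·(αn+β)^{n−1}·t^n/n! converges absolutely; that is, the function n ↦ |β·(α(n+1)+β)^{n}·t^{n+1}/(n+1)!| is summable over n ∈ ℕ. -/
lemma pow_self_le_exp_pow_mul_factorial (m : ℕ) :
    (m : ℝ) ^ m ≤ Real.exp 1 ^ m * m.factorial := by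
  have hterm : (m : ℝ) ^ m / m.factorial ≤ Real.exp m := by
    calc (m : ℝ) ^ m / m.factorial
        ≤ ∑ i ∈ Finset.range (m + 1), (m : ℝ) ^ i / i.factorial :=
          Finset.single_le_sum (f := fun i => (m : ℝ) ^ i / (i.factorial : ℝ))
            (fun i _ => by positivity) (Finset.self_mem_range_succ m)
      _ ≤ Real.exp m := Real.sum_le_exp_of_nonneg (by positivity) _
  have hexp : Real.exp m = Real.exp 1 ^ m := by
    rw [← Real.exp_nat_mul, mul_one]
  rw [div_le_iff₀ (by positivity : (0:ℝ) < m.factorial)] at hterm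
  rw [hexp] at hterm
  linarith [hterm]

set_option maxHeartbeats 1000000 in
/-- **Absolute convergence of the generalized exponential series.**
For complex `α ≠ 0`, `β`, and `|t| < 1/(e|α|)`, the series
`Σ_{n≥1} β(αn+β)^{n−1} tⁿ/n!` converges absolutely. -/
theorem generalized_exponential_summable (α β t : ℂ) (hα : α ≠ 0)
    (ht : ‖t‖ < 1 / (Real.exp 1 * ‖α‖)) :
    Summable fun n : ℕ =>
      ‖β * (α * ((n : ℂ) + 1) + β) ^ n * t ^ (n + 1) /
        (((n + 1).factorial : ℂ))‖ := by
  set E := Real.exp 1 with hE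
  set a := ‖α‖ with ha
  set b := ‖β‖ with hb
  set s := ‖t‖ with hs
  have hE0 : 0 < E := Real.exp_pos 1
  have ha0 : 0 < a := norm_pos_iff.mpr hα
  have hb0 : 0 ≤ b := norm_nonneg β
  have hs0 : 0 ≤ s := norm_nonneg t
  have hEas : E * a * s < 1 := by
    have h2 : s * (E * a) < (1 / (E * a)) * (E * a) := by
      apply mul_lt_mul_of_pos_right ht (by positivity)
    rw [one_div_mul_cancel (by positivity)] at h2
    linarith
  set r : ℝ := (E * a * s + 1) / 2 with hr
  clear_value r
  have hEas0 : 0 ≤ E * a * s := by positivity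
  have hr0 : 0 ≤ r := by rw [hr]; linarith
  have hr1 : r < 1 := by rw [hr]; linarith
  set δ : ℝ := (1 - E * a * s) / 2 with hδdef
  clear_value δ
  have hδ : 0 < δ := by rw [hδdef]; linarith
  obtain ⟨N, hN⟩ := exists_nat_ge (b * s * E / δ)
  have hN' : b * s * E ≤ δ * N := by
    rw [div_le_iff₀ hδ] at hN; linarith
  set C : ℝ := b * s * E with hC
  clear_value C
  have hC0 : 0 ≤ C := by rw [hC]; positivity
  -- key pointwise bound for n ≥ N
  have key : ∀ n : ℕ, N ≤ n →
      ‖β * (α * ((n : ℂ) + 1) + β) ^ n * t ^ (n + 1) /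
        (((n + 1).factorial : ℂ))‖ ≤ C * r ^ n := by
    intro n hn
    set X : ℂ := α * ((n : ℂ) + 1) + β with hX
    have habs : ‖β * X ^ n * t ^ (n + 1) / (((n + 1).factorial : ℂ))‖
        = b * ‖X‖ ^ n * s ^ (n + 1) / ((n + 1).factorial : ℝ) := by
      rw [norm_div, norm_mul, norm_mul, norm_pow, norm_pow, Complex.norm_natCast]
    rw [habs, div_le_iff₀ (by positivity : (0:ℝ) < ((n + 1).factorial : ℝ))]
    have hfac : ((n : ℝ) + 1) ^ (n+1) / E ^ (n+1) ≤ ((n + 1).factorial : ℝ) := by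
      rw [div_le_iff₀ (by positivity)]
      have h := pow_self_le_exp_pow_mul_factorial (n + 1)
      push_cast at h ⊢
      linarith
    have hXle : ‖X‖ ≤ a * ((n : ℝ) + 1) + b := by
      calc ‖X‖ ≤ ‖α * ((n : ℂ) + 1)‖ + b := norm_add_le _ _
        _ = a * ‖(n : ℂ) + 1‖ + b := by rw [norm_mul]
        _ = a * ((n : ℝ) + 1) + b := by
            congr 2
            have h1 : ((n : ℂ) + 1) = ((n + 1 : ℕ) : ℂ) := by push_cast; ring
            rw [h1, Complex.norm_natCast]; push_cast; ring
    have hXnonneg : 0 ≤ ‖X‖ := norm_nonneg X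
    have hbsE : b * s * E ≤ δ * ((n : ℝ) + 1) := by
      have hNn : (N : ℝ) ≤ (n : ℝ) := Nat.cast_le.mpr hn
      nlinarith [hδ.le]
    have hrδ : E * a * s + δ = r := by rw [hr, hδdef]; ring
    have hmain : ‖X‖ * (s * E) ≤ r * ((n : ℝ) + 1) := by
      calc ‖X‖ * (s * E) ≤ (a * ((n : ℝ) + 1) + b) * (s * E) :=
            mul_le_mul_of_nonneg_right hXle (by positivity)
        _ = (E * a * s) * ((n : ℝ) + 1) + b * s * E := by ring
        _ ≤ (E * a * s) * ((n : ℝ) + 1) + δ * ((n : ℝ) + 1) := by linarith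
        _ = r * ((n : ℝ) + 1) := by rw [← hrδ]; ring
    have hpow : (‖X‖ * (s * E)) ^ n ≤ (r * ((n : ℝ) + 1)) ^ n :=
      pow_le_pow_left₀ (by positivity) hmain n
    have hstep : b * ‖X‖ ^ n * s ^ (n + 1) * E ^ (n + 1)
        ≤ C * r ^ n * ((n : ℝ) + 1) ^ (n + 1) := by
      have hone : (1 : ℝ) ≤ (n : ℝ) + 1 := by
        have h0 : (0:ℝ) ≤ (n : ℝ) := Nat.cast_nonneg n
        linarith
      have h2 : (0:ℝ) ≤ (r * ((n : ℝ) + 1)) ^ n := by positivity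
      have hC0' : 0 ≤ b * s * E := hC ▸ hC0
      calc b * ‖X‖ ^ n * s ^ (n + 1) * E ^ (n + 1)
          = (b * s * E) * (‖X‖ * (s * E)) ^ n := by
            rw [mul_pow, mul_pow]; ring
        _ ≤ (b * s * E) * (r * ((n : ℝ) + 1)) ^ n :=
            mul_le_mul_of_nonneg_left hpow hC0'
        _ ≤ (b * s * E) * ((r * ((n : ℝ) + 1)) ^ n * ((n : ℝ) + 1)) :=
            mul_le_mul_of_nonneg_left (le_mul_of_one_le_right h2 hone) hC0'
        _ = C * r ^ n * ((n : ℝ) + 1) ^ (n + 1) := by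
            rw [hC, mul_pow]; ring
    calc b * ‖X‖ ^ n * s ^ (n + 1)
        ≤ C * r ^ n * (((n : ℝ) + 1) ^ (n+1) / E ^ (n+1)) := by
          have heq : C * r ^ n * (((n : ℝ) + 1) ^ (n+1) / E ^ (n+1))
              = (C * r ^ n * ((n : ℝ) + 1) ^ (n+1)) / E ^ (n+1) := by ring
          rw [heq, le_div_iff₀ (by positivity : (0:ℝ) < E ^ (n+1))]
          exact hstep
      _ ≤ C * r ^ n * ((n + 1).factorial : ℝ) :=
          mul_le_mul_of_nonneg_left hfac (by positivity)
  -- conclude summability by comparison with a geometric series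
  rw [← summable_nat_add_iff N]
  refine Summable.of_nonneg_of_le (fun n => norm_nonneg _) (fun n => ?_)
    ((summable_geometric_of_lt_one hr0 hr1).mul_left (C * r ^ N))
  have h := key (n + N) (Nat.le_add_left N n)
  calc ‖_‖ ≤ C * r ^ (n + N) := h
    _ = (C * r ^ N) * r ^ n := by rw [pow_add]; ring
end
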